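/- arXiv:0901.1883 — 6 statements merged into one kernel-verified Lean document; each statement's English description precedes it below -/
import Mathlib

section
/- For every integer n ≥ 1 and integer r ≥ 0, the n×n Hankel determinant H_n^{(r)}[ζ] = det(ζ(i+j+r))_{1≤i,j≤n} equals (1/n!) · ∑_{m₁,…,m_n ≥ 1} (m₁ m₂ ⋯ m_n)^{−(2n+r)} · ∏_{i<j} (m_i − m_j)². -/
open Finset

open Matrix

lemma hz_summable_norm (k : ℕ) (hk : 2 ≤ k) :
    Summable fun m : ℕ+ => ‖((m : ℂ) ^ k)⁻¹‖ := by
  have h : Summable fun m : ℕ => ‖((m : ℂ) ^ k)⁻¹‖ := by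
    have : Summable fun m : ℕ => (1 : ℝ) / (m : ℝ) ^ k :=
      (Real.summable_one_div_nat_pow).2 (by omega)
    refine this.congr fun m => ?_
    simp [norm_inv, norm_pow, one_div]
  exact h.comp_injective PNat.coe_injective

lemma hz_zeta_pnat (k : ℕ) (hk : 2 ≤ k) :
    riemannZeta k = ∑' m : ℕ+, ((m : ℂ) ^ k)⁻¹ := by
  rw [zeta_nat_eq_tsum_of_gt_one (by omega)]
  simp_rw [one_div]
  refine (Function.Injective.tsum_eq (f := fun m : ℕ => ((m : ℂ) ^ k)⁻¹)
    (g := fun m : ℕ+ => (m : ℕ)) PNat.coe_injective ?_).symm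
  intro x hx
  have hx0 : x ≠ 0 := by
    rintro rfl
    simp [zero_pow (by omega : k ≠ 0)] at hx
  exact ⟨⟨x, Nat.pos_of_ne_zero hx0⟩, rfl⟩

lemma hz_pi_tsum {n : ℕ} (f : Fin n → ℕ+ → ℂ) (hf : ∀ i, Summable fun m => ‖f i m‖) :
    Summable (fun m : Fin n → ℕ+ => ‖∏ i, f i (m i)‖) ∧
      ∏ i, ∑' m, f i m = ∑' m : Fin n → ℕ+, ∏ i, f i (m i) := by
  induction n with
  | zero =>
      refine ⟨?_, by simp [tsum_fintype]⟩
      exact Summable.of_finite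
  | succ n ih =>
      obtain ⟨ihs, iht⟩ := ih (fun i => f i.succ) (fun i => hf i.succ)
      have hs2 : Summable fun p : ℕ+ × (Fin n → ℕ+) =>
          ‖f 0 p.1 * ∏ i : Fin n, f i.succ (p.2 i)‖ :=
        Summable.mul_norm (f := f 0)
          (g := fun m : Fin n → ℕ+ => ∏ i : Fin n, f i.succ (m i)) (hf 0) ihs
      set e : ℕ+ × (Fin n → ℕ+) ≃ (Fin (n + 1) → ℕ+) :=
        Fin.consEquiv (fun _ => ℕ+) with he
      have hprod : ∀ m : Fin (n + 1) → ℕ+,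
          f 0 (m 0) * ∏ i : Fin n, f i.succ (m i.succ) =
            f 0 (e.symm m).1 * ∏ i : Fin n, f i.succ ((e.symm m).2 i) := by
        intro m
        simp [he, Fin.tail]
      have hsum : Summable (fun m : Fin (n + 1) → ℕ+ => ‖∏ i, f i (m i)‖) := by
        have h3 := hs2.comp_injective e.symm.injective
        refine h3.congr fun m => ?_
        simp only [Function.comp_apply]
        rw [Fin.prod_univ_succ, hprod m]
      refine ⟨hsum, ?_⟩
      rw [Fin.prod_univ_succ, iht,
        tsum_mul_tsum_of_summable_norm (hf 0) ihs,
        ← e.symm.tsum_eq (f := fun p : ℕ+ × (Fin n → ℕ+) =>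
          f 0 p.1 * ∏ i : Fin n, f i.succ (p.2 i))]
      exact tsum_congr fun m => by rw [Fin.prod_univ_succ, hprod m]

lemma hz_detB {n r : ℕ} (m : Fin n → ℕ+) :
    Matrix.det (Matrix.of fun i j : Fin n =>
        ((m j : ℂ) ^ ((i : ℕ) + 1 + ((j : ℕ) + 1) + r))⁻¹) =
      (∏ j, ((m j : ℂ))⁻¹ ^ ((j : ℕ) + 2 + r)) *
        ∏ i, ∏ j ∈ Ioi i, (((m j : ℂ))⁻¹ - ((m i : ℂ))⁻¹) := by
  have hM : (Matrix.of fun i j : Fin n =>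
      ((m j : ℂ) ^ ((i : ℕ) + 1 + ((j : ℕ) + 1) + r))⁻¹) =
      Matrix.of fun i j : Fin n =>
        (((m j : ℂ))⁻¹ ^ ((j : ℕ) + 2 + r)) *
          (((Matrix.vandermonde (fun j : Fin n => ((m j : ℂ))⁻¹))ᵀ) i j) := by
    ext i j
    simp only [Matrix.of_apply, Matrix.transpose_apply, Matrix.vandermonde_apply]
    rw [← inv_pow, ← pow_add]
    congr 1
    omega
  rw [hM, Matrix.det_mul_row, Matrix.det_transpose, Matrix.det_vandermonde]

lemma hz_prod_pairs {n : ℕ} (x : Fin n → ℂ) :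
    ∏ i, ∏ j ∈ Ioi i, (x i * x j) = ∏ i, x i ^ (n - 1) := by
  have h1 : ∏ i, ∏ j ∈ Ioi i, (x i * x j) =
      (∏ i, ∏ _j ∈ Ioi i, x i) * (∏ i, ∏ j ∈ Ioi i, x j) := by
    simp only [Finset.prod_mul_distrib]
  rw [h1]
  have h2 : ∏ i : Fin n, ∏ _j ∈ Ioi i, x i = ∏ i : Fin n, x i ^ (n - 1 - (i : ℕ)) := by
    refine Finset.prod_congr rfl fun i _ => ?_
    rw [Finset.prod_const, Fin.card_Ioi]
  have h3 : ∏ i : Fin n, ∏ j ∈ Ioi i, x j = ∏ j : Fin n, x j ^ (j : ℕ) := by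
    rw [Finset.prod_comm' (t' := Finset.univ) (s' := fun j => Iio j)]
    · exact Finset.prod_congr rfl fun j _ => by rw [Finset.prod_const, Fin.card_Iio]
    · intro i j
      simp [Finset.mem_Ioi, Finset.mem_Iio]
  rw [h2, h3, ← Finset.prod_mul_distrib]
  refine Finset.prod_congr rfl fun i _ => ?_
  rw [← pow_add]
  congr 1
  have := i.isLt
  omega

lemma hz_sym {n r : ℕ} (hn : 1 ≤ n) (m : Fin n → ℕ+) :
    ∑ σ : Equiv.Perm (Fin n),
      ((∏ j, ((m (σ j) : ℂ))⁻¹ ^ ((j : ℕ) + 2 + r)) *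
        ∏ i, ∏ j ∈ Ioi i, (((m (σ j) : ℂ))⁻¹ - ((m (σ i) : ℂ))⁻¹)) =
      (∏ i, ((m i : ℂ) ^ (2 * n + r))⁻¹) *
        ∏ i, ∏ j ∈ Ioi i, ((m i : ℂ) - (m j : ℂ)) ^ 2 := by
  set x : Fin n → ℂ := fun i => ((m i : ℂ))⁻¹ with hx
  have hm0 : ∀ i, ((m i : ℂ)) ≠ 0 := fun i => by
    exact_mod_cast Nat.cast_ne_zero.2 (m i).ne_zero
  set V : ℂ := (Matrix.vandermonde x).det with hV
  -- rewrite each summand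
  have hterm : ∀ σ : Equiv.Perm (Fin n),
      ((∏ j, ((m (σ j) : ℂ))⁻¹ ^ ((j : ℕ) + 2 + r)) *
        ∏ i, ∏ j ∈ Ioi i, (((m (σ j) : ℂ))⁻¹ - ((m (σ i) : ℂ))⁻¹)) =
      (∏ i, x i ^ (2 + r)) * V *
        (((Equiv.Perm.sign σ : ℤ) : ℂ) * ∏ j, x (σ j) ^ (j : ℕ)) := by
    intro σ
    have h1 : ∏ i, ∏ j ∈ Ioi i, (x (σ j) - x (σ i)) =
        ((Equiv.Perm.sign σ : ℤ) : ℂ) * V := by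
      have : (Matrix.vandermonde (x ∘ σ)) = (Matrix.vandermonde x).submatrix σ id := by
        ext i j; simp [Matrix.vandermonde_apply]
      calc ∏ i, ∏ j ∈ Ioi i, (x (σ j) - x (σ i))
          = (Matrix.vandermonde (x ∘ σ)).det := (Matrix.det_vandermonde _).symm
        _ = ((Equiv.Perm.sign σ : ℤ) : ℂ) * V := by
            rw [this, Matrix.det_permute]
    have h2 : ∏ j, x (σ j) ^ ((j : ℕ) + 2 + r) =
        (∏ i, x i ^ (2 + r)) * ∏ j, x (σ j) ^ (j : ℕ) := by
      have : ∀ j : Fin n, x (σ j) ^ ((j : ℕ) + 2 + r)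
          = x (σ j) ^ (j : ℕ) * x (σ j) ^ (2 + r) := by
        intro j
        rw [← pow_add]
        congr 1
        omega
      rw [Finset.prod_congr rfl fun j _ => this j, Finset.prod_mul_distrib,
        Equiv.prod_comp σ (fun i => x i ^ (2 + r))]
      ring
    rw [h2, h1]
    ring
  rw [Finset.sum_congr rfl fun σ _ => hterm σ, ← Finset.mul_sum]
  have h3 : ∑ σ : Equiv.Perm (Fin n),
      (((Equiv.Perm.sign σ : ℤ) : ℂ) * ∏ j, x (σ j) ^ (j : ℕ)) = V := by
    rw [hV, Matrix.det_apply']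
    exact Finset.sum_congr rfl fun σ _ => by simp [Matrix.vandermonde_apply]
  rw [h3, mul_assoc]
  -- now  (∏ x^(2+r)) * V * V = RHS
  have hVsq : V * V = (∏ i, ∏ j ∈ Ioi i, ((m i : ℂ) - (m j : ℂ)) ^ 2) *
      ∏ i, x i ^ (2 * (n - 1)) := by
    rw [hV, Matrix.det_vandermonde, ← Finset.prod_mul_distrib]
    have step : ∀ i : Fin n, (∏ j ∈ Ioi i, (x j - x i)) * (∏ j ∈ Ioi i, (x j - x i)) =
        (∏ j ∈ Ioi i, ((m i : ℂ) - (m j : ℂ)) ^ 2) * ∏ j ∈ Ioi i, (x i * x j) ^ 2 := by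
      intro i
      rw [← Finset.prod_mul_distrib, ← Finset.prod_mul_distrib]
      refine Finset.prod_congr rfl fun j _ => ?_
      have : x j - x i = ((m i : ℂ) - (m j : ℂ)) * (x i * x j) := by
        have hi := hm0 i
        have hj := hm0 j
        simp only [hx]
        field_simp
      rw [this]; ring
    rw [Finset.prod_congr rfl fun i _ => step i, Finset.prod_mul_distrib]
    congr 1
    have := hz_prod_pairs x
    calc ∏ i, ∏ j ∈ Ioi i, (x i * x j) ^ 2
        = (∏ i, ∏ j ∈ Ioi i, (x i * x j)) ^ 2 := by
          rw [Finset.prod_congr rfl fun i _ => Finset.prod_pow _ _ _, Finset.prod_pow]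
      _ = (∏ i, x i ^ (n - 1)) ^ 2 := by rw [hz_prod_pairs x]
      _ = ∏ i, x i ^ (2 * (n - 1)) := by
          rw [← Finset.prod_pow]
          exact Finset.prod_congr rfl fun i _ => by rw [← pow_mul, Nat.mul_comm]
  calc (∏ i, x i ^ (2 + r)) * (V * V)
      = (∏ i, x i ^ (2 + r)) * ((∏ i, ∏ j ∈ Ioi i, ((m i : ℂ) - (m j : ℂ)) ^ 2) *
        ∏ i, x i ^ (2 * (n - 1))) := by rw [hVsq]
    _ = ((∏ i, x i ^ (2 + r)) * ∏ i, x i ^ (2 * (n - 1))) *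
        ∏ i, ∏ j ∈ Ioi i, ((m i : ℂ) - (m j : ℂ)) ^ 2 := by ring
    _ = (∏ i, ((m i : ℂ) ^ (2 * n + r))⁻¹) *
        ∏ i, ∏ j ∈ Ioi i, ((m i : ℂ) - (m j : ℂ)) ^ 2 := by
        congr 1
        rw [← Finset.prod_mul_distrib]
        refine Finset.prod_congr rfl fun i _ => ?_
        rw [hx]
        rw [← pow_add, ← inv_pow]
        congr 1
        omega

theorem hankel_zeta_sum (n r : ℕ) (hn : 1 ≤ n) :
    Matrix.det (Matrix.of fun i j : Fin n =>
        riemannZeta ((i : ℕ) + 1 + ((j : ℕ) + 1) + r)) =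
      (1 / (n.factorial : ℂ)) *
        ∑' m : Fin n → ℕ+,
          (∏ i, ((m i : ℂ) ^ (2 * n + r))⁻¹) *
            ∏ i, ∏ j ∈ Finset.Ioi i, ((m i : ℂ) - (m j : ℂ)) ^ 2 := by
  classical
  set F : Equiv.Perm (Fin n) → (Fin n → ℕ+) → ℂ :=
    fun σ m => ∏ i, ((m i : ℂ) ^ ((σ i : ℕ) + 1 + ((i : ℕ) + 1) + r))⁻¹ with hF
  set f : (Fin n → ℕ+) → ℂ := fun m =>
    (∏ j, ((m j : ℂ))⁻¹ ^ ((j : ℕ) + 2 + r)) *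
      ∏ i, ∏ j ∈ Ioi i, (((m j : ℂ))⁻¹ - ((m i : ℂ))⁻¹) with hf
  have hFs : ∀ σ : Equiv.Perm (Fin n),
      Summable (fun m : Fin n → ℕ+ => ‖F σ m‖) ∧
        (∏ i, ∑' m : ℕ+, ((m : ℂ) ^ ((σ i : ℕ) + 1 + ((i : ℕ) + 1) + r))⁻¹)
          = ∑' m : Fin n → ℕ+, F σ m := fun σ =>
    hz_pi_tsum (fun i => fun m : ℕ+ => ((m : ℂ) ^ ((σ i : ℕ) + 1 + ((i : ℕ) + 1) + r))⁻¹)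
      (fun i => hz_summable_norm _ (by omega))
  -- pointwise: finite sum over σ equals f m
  have hpoint : ∀ m : Fin n → ℕ+,
      ∑ σ : Equiv.Perm (Fin n), ((Equiv.Perm.sign σ : ℤ) : ℂ) * F σ m = f m := by
    intro m
    have := Matrix.det_apply' (Matrix.of fun i j : Fin n =>
        ((m j : ℂ) ^ ((i : ℕ) + 1 + ((j : ℕ) + 1) + r))⁻¹)
    rw [hz_detB m] at this
    simp only [hf]
    rw [this]
    rfl
  have hfs : Summable f := by
    have : Summable (fun m => ∑ σ : Equiv.Perm (Fin n),
        ((Equiv.Perm.sign σ : ℤ) : ℂ) * F σ m) :=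
      summable_sum fun σ _ => ((hFs σ).1.of_norm).mul_left _
    exact this.congr hpoint
  -- LHS equals ∑' f
  have hdet : Matrix.det (Matrix.of fun i j : Fin n =>
      riemannZeta ((i : ℕ) + 1 + ((j : ℕ) + 1) + r)) = ∑' m, f m := by
    rw [Matrix.det_apply']
    have hz : ∀ a b : Fin n,
        (Matrix.of fun i j : Fin n => riemannZeta ((i : ℕ) + 1 + ((j : ℕ) + 1) + r)) a b =
          ∑' m : ℕ+, ((m : ℂ) ^ ((a : ℕ) + 1 + ((b : ℕ) + 1) + r))⁻¹ := by
      intro a b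
      have h := hz_zeta_pnat ((a : ℕ) + 1 + ((b : ℕ) + 1) + r) (by omega)
      push_cast at h
      simpa using h
    calc ∑ σ : Equiv.Perm (Fin n), ((Equiv.Perm.sign σ : ℤ) : ℂ) *
          ∏ i, (Matrix.of fun i j : Fin n =>
            riemannZeta ((i : ℕ) + 1 + ((j : ℕ) + 1) + r)) (σ i) i
        = ∑ σ : Equiv.Perm (Fin n), ((Equiv.Perm.sign σ : ℤ) : ℂ) *
            ∑' m : Fin n → ℕ+, F σ m := by
          refine Finset.sum_congr rfl fun σ _ => ?_
          rw [← (hFs σ).2]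
          congr 1
          exact Finset.prod_congr rfl fun i _ => hz (σ i) i
      _ = ∑ σ : Equiv.Perm (Fin n),
            ∑' m : Fin n → ℕ+, ((Equiv.Perm.sign σ : ℤ) : ℂ) * F σ m := by
          refine Finset.sum_congr rfl fun σ _ => ?_
          rw [tsum_mul_left]
      _ = ∑' m : Fin n → ℕ+, ∑ σ : Equiv.Perm (Fin n),
            ((Equiv.Perm.sign σ : ℤ) : ℂ) * F σ m := by
          refine (Summable.tsum_finsetSum fun σ _ => ?_).symm
          exact ((hFs σ).1.of_norm).mul_left _
      _ = ∑' m, f m := tsum_congr hpoint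
  rw [hdet]
  -- RHS : symmetrize
  have hsymm : ∑' m : Fin n → ℕ+,
      (∏ i, ((m i : ℂ) ^ (2 * n + r))⁻¹) *
        ∏ i, ∏ j ∈ Finset.Ioi i, ((m i : ℂ) - (m j : ℂ)) ^ 2
      = (n.factorial : ℂ) * ∑' m, f m := by
    calc ∑' m : Fin n → ℕ+,
        (∏ i, ((m i : ℂ) ^ (2 * n + r))⁻¹) *
          ∏ i, ∏ j ∈ Finset.Ioi i, ((m i : ℂ) - (m j : ℂ)) ^ 2
        = ∑' m : Fin n → ℕ+, ∑ σ : Equiv.Perm (Fin n), f (m ∘ σ) := by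
          refine tsum_congr fun m => ?_
          rw [← hz_sym hn m]
          rfl
      _ = ∑ σ : Equiv.Perm (Fin n), ∑' m : Fin n → ℕ+, f (m ∘ σ) := by
          refine (Summable.tsum_finsetSum fun σ _ => ?_)
          exact hfs.comp_injective
            (Equiv.arrowCongr (σ.symm : Fin n ≃ Fin n) (Equiv.refl ℕ+)).injective
      _ = ∑ σ : Equiv.Perm (Fin n), ∑' m, f m := by
          refine Finset.sum_congr rfl fun σ _ => ?_
          exact (Equiv.arrowCongr (σ.symm : Fin n ≃ Fin n) (Equiv.refl ℕ+)).tsum_eq f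
      _ = (n.factorial : ℂ) * ∑' m, f m := by
          rw [Finset.sum_const, Finset.card_univ, Fintype.card_perm, Fintype.card_fin,
            nsmul_eq_mul]
  rw [hsymm, one_div, inv_mul_cancel_left₀]
  exact_mod_cast Nat.cast_ne_zero.2 n.factorial_ne_zero
end

section
/- Let F(s) = ∑_{m≥1} f(m)/m^s be a Dirichlet series with nonnegative real coefficients f(m), absolutely convergent for s ≥ 2. Then for every n ≥ 1 and r ≥ 0, det(F(i+j+r))_{1≤i,j≤n} = (1/n!) ∑_{m₁,…,m_n ≥ 1} (∏_{i=1}^n f(m_i)/m_i^{2n+r}) ∏_{i<j}(m_i − m_j)². -/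
open Finset

-- Lemma A: product over pairs
lemma prod_pairs_mul {n : ℕ} (y : Fin n → ℝ) :
    ∏ i, ∏ j ∈ Ioi i, (y i * y j) = ∏ i, y i ^ (n - 1) := by
  have h1 : ∏ i, ∏ j ∈ Ioi i, (y i * y j)
      = (∏ i, ∏ j ∈ Ioi i, y i) * (∏ i, ∏ j ∈ Ioi i, y j) := by
    rw [← Finset.prod_mul_distrib]
    exact Finset.prod_congr rfl fun i _ => Finset.prod_mul_distrib
  have h2 : ∏ i : Fin n, ∏ j ∈ Ioi i, y j = ∏ j : Fin n, ∏ i ∈ Iio j, y j := by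
    apply Finset.prod_comm'
    intro i j
    simp [Finset.mem_Ioi, Finset.mem_Iio, and_comm]
  rw [h1, h2, ← Finset.prod_mul_distrib]
  apply Finset.prod_congr rfl
  intro i _
  rw [Finset.prod_const, Finset.prod_const, Fin.card_Ioi, Fin.card_Iio, ← pow_add]
  congr 1
  have := i.isLt
  omega

-- tsum of products over pi types
lemma pi_tsum_prod : ∀ (n : ℕ) (g : Fin n → ℕ+ → ℝ), (∀ i m, 0 ≤ g i m) → (∀ i, Summable (g i)) →
    Summable (fun m : Fin n → ℕ+ => ∏ i, g i (m i)) ∧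
    (∑' m : Fin n → ℕ+, ∏ i, g i (m i)) = ∏ i, ∑' m, g i m := by
  intro n
  induction n with
  | zero =>
    intro g _ _
    constructor
    · exact Summable.of_finite
    · simp
  | succ n ih =>
    intro g hnn hs
    have ihs := ih (fun i => g i.succ) (fun i m => hnn i.succ m) (fun i => hs i.succ)
    set e : (ℕ+ × (Fin n → ℕ+)) ≃ (Fin (n+1) → ℕ+) := Fin.consEquiv (fun _ => ℕ+)
    have key : ∀ p : ℕ+ × (Fin n → ℕ+),
        (∏ i, g i (e p i)) = g 0 p.1 * ∏ i : Fin n, g i.succ (p.2 i) := by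
      intro p
      rw [Fin.prod_univ_succ]
      simp [e, Fin.consEquiv]
    have hmul : Summable (fun p : ℕ+ × (Fin n → ℕ+) =>
        g 0 p.1 * ∏ i : Fin n, g i.succ (p.2 i)) := by
      apply Summable.mul_of_nonneg (hs 0) ihs.1
      · exact fun m => hnn 0 m
      · exact fun v => Finset.prod_nonneg fun i _ => hnn i.succ _
    have hsummable : Summable (fun m : Fin (n+1) → ℕ+ => ∏ i, g i (m i)) := by
      rw [← e.summable_iff]
      exact hmul.congr fun p => (key p).symm
    refine ⟨hsummable, ?_⟩
    rw [← e.tsum_eq]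
    have : ∑' p : ℕ+ × (Fin n → ℕ+), ∏ i, g i (e p i)
        = ∑' p : ℕ+ × (Fin n → ℕ+), g 0 p.1 * ∏ i : Fin n, g i.succ (p.2 i) :=
      tsum_congr key
    rw [this, Fin.prod_univ_succ, ← ihs.2]
    refine (tsum_mul_tsum_of_summable_norm (f := g 0)
        (g := fun v : Fin n → ℕ+ => ∏ i, g i.succ (v i)) ?_ ?_).symm
    · exact (hs 0).congr fun m => (Real.norm_of_nonneg (hnn 0 m)).symm
    · exact ihs.1.congr fun v =>
        (Real.norm_of_nonneg (Finset.prod_nonneg fun i _ => hnn i.succ _)).symm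

def permPi {n : ℕ} (σ : Equiv.Perm (Fin n)) : (Fin n → ℕ+) ≃ (Fin n → ℕ+) :=
  ⟨fun m i => m (σ i), fun m i => m (σ.symm i),
    fun m => by funext i; simp, fun m => by funext i; simp⟩


theorem hankel_dirichlet_sum (f : ℕ → ℝ) (hf : ∀ m, 0 ≤ f m)
    (hsum : ∀ s : ℕ, 2 ≤ s → Summable (fun m : ℕ+ => f m / (m : ℝ) ^ s))
    (F : ℕ → ℝ) (hF : ∀ s : ℕ, 2 ≤ s → F s = ∑' m : ℕ+, f m / (m : ℝ) ^ s)
    (n r : ℕ) (hn : 1 ≤ n) :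
    Matrix.det (Matrix.of fun i j : Fin n =>
        F ((i : ℕ) + 1 + ((j : ℕ) + 1) + r)) =
      (1 / (n.factorial : ℝ)) *
        ∑' m : Fin n → ℕ+,
          (∏ i, f (m i) / (m i : ℝ) ^ (2 * n + r)) *
            ∏ i, ∏ j ∈ Finset.Ioi i, ((m i : ℝ) - (m j : ℝ)) ^ 2 := by
  classical
  -- the per-m expanded summand
  set c : (Fin n → ℕ+) → ℝ := fun m =>
    (∏ i, f (m i) * ((m i : ℝ))⁻¹ ^ ((i : ℕ) + 2 + r)) *
      ∏ i, ∏ j ∈ Ioi i, (((m j : ℝ))⁻¹ - ((m i : ℝ))⁻¹) with hc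
  set T : (Fin n → ℕ+) → ℝ := fun m =>
    (∏ i, f (m i) / (m i : ℝ) ^ (2 * n + r)) *
      ∏ i, ∏ j ∈ Finset.Ioi i, ((m i : ℝ) - (m j : ℝ)) ^ 2 with hT
  -- the per-(σ,m) summand
  set g : Equiv.Perm (Fin n) → (Fin n → ℕ+) → ℝ := fun σ m =>
    ∏ i, f (m i) / (m i : ℝ) ^ ((σ i : ℕ) + 1 + ((i : ℕ) + 1) + r) with hg
  clear_value c T g
  have hgsum : ∀ σ, Summable (g σ) ∧
      (∑' m : Fin n → ℕ+, g σ m)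
        = ∏ i, ∑' m : ℕ+, f m / (m : ℝ) ^ ((σ i : ℕ) + 1 + ((i : ℕ) + 1) + r) := by
    intro σ
    simp only [hg]
    exact pi_tsum_prod n (fun i mm => f mm / (mm : ℝ) ^ ((σ i : ℕ) + 1 + ((i : ℕ) + 1) + r))
      (fun i mm => div_nonneg (hf mm) (by positivity)) (fun i => hsum _ (by omega))
  -- vandermonde determinant expansions
  have hvdmT : ∀ x : Fin n → ℝ,
      ∑ σ : Equiv.Perm (Fin n), ((Equiv.Perm.sign σ : ℤ) : ℝ) * ∏ i, x i ^ ((σ i : ℕ))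
        = ∏ i, ∏ j ∈ Ioi i, (x j - x i) := by
    intro x
    have h1 : (Matrix.of fun a b : Fin n => x b ^ (a : ℕ)) = (Matrix.vandermonde x).transpose := by
      refine Matrix.ext fun a b => ?_
      rw [Matrix.of_apply, Matrix.transpose_apply, Matrix.vandermonde_apply]
    calc ∑ σ : Equiv.Perm (Fin n), ((Equiv.Perm.sign σ : ℤ) : ℝ) * ∏ i, x i ^ ((σ i : ℕ))
        = Matrix.det (Matrix.of fun a b : Fin n => x b ^ (a : ℕ)) := by
          rw [Matrix.det_apply']; rfl
      _ = ∏ i, ∏ j ∈ Ioi i, (x j - x i) := by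
          rw [h1, Matrix.det_transpose, Matrix.det_vandermonde]
  have hvdm : ∀ x : Fin n → ℝ,
      ∑ σ : Equiv.Perm (Fin n), ((Equiv.Perm.sign σ : ℤ) : ℝ) * ∏ i, x (σ i) ^ ((i : ℕ))
        = ∏ i, ∏ j ∈ Ioi i, (x j - x i) := by
    intro x
    calc ∑ σ : Equiv.Perm (Fin n), ((Equiv.Perm.sign σ : ℤ) : ℝ) * ∏ i, x (σ i) ^ ((i : ℕ))
        = Matrix.det (Matrix.vandermonde x) := by
          rw [Matrix.det_apply']; rfl
      _ = ∏ i, ∏ j ∈ Ioi i, (x j - x i) := Matrix.det_vandermonde x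
  -- pointwise identity 1
  have hpw1 : ∀ m : Fin n → ℕ+,
      ∑ σ : Equiv.Perm (Fin n), ((Equiv.Perm.sign σ : ℤ) : ℝ) * g σ m = c m := by
    intro m
    simp only [hg, hc]
    have hterm : ∀ (σ : Equiv.Perm (Fin n)) (i : Fin n),
        f (m i) / (m i : ℝ) ^ ((σ i : ℕ) + 1 + ((i : ℕ) + 1) + r)
          = (f (m i) * ((m i : ℝ))⁻¹ ^ ((i : ℕ) + 2 + r)) * ((m i : ℝ))⁻¹ ^ ((σ i : ℕ)) := by
      intro σ i
      have he : ((σ i : ℕ) + 1 + ((i : ℕ) + 1) + r) = ((i : ℕ) + 2 + r) + (σ i : ℕ) := by omega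
      rw [div_eq_mul_inv, ← inv_pow, he, pow_add]
      ring
    calc ∑ σ : Equiv.Perm (Fin n), ((Equiv.Perm.sign σ : ℤ) : ℝ) *
            ∏ i, f (m i) / (m i : ℝ) ^ ((σ i : ℕ) + 1 + ((i : ℕ) + 1) + r)
        = ∑ σ : Equiv.Perm (Fin n), (∏ i, f (m i) * ((m i : ℝ))⁻¹ ^ ((i : ℕ) + 2 + r)) *
            (((Equiv.Perm.sign σ : ℤ) : ℝ) * ∏ i, ((m i : ℝ))⁻¹ ^ ((σ i : ℕ))) := by
          refine Finset.sum_congr rfl fun σ _ => ?_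
          rw [Finset.prod_congr rfl fun i _ => hterm σ i, Finset.prod_mul_distrib]
          ring
      _ = (∏ i, f (m i) * ((m i : ℝ))⁻¹ ^ ((i : ℕ) + 2 + r)) *
            ∑ σ : Equiv.Perm (Fin n), ((Equiv.Perm.sign σ : ℤ) : ℝ) *
              ∏ i, ((m i : ℝ))⁻¹ ^ ((σ i : ℕ)) := by
          rw [Finset.mul_sum]
      _ = (∏ i, f (m i) * ((m i : ℝ))⁻¹ ^ ((i : ℕ) + 2 + r)) *
            ∏ i, ∏ j ∈ Ioi i, (((m j : ℝ))⁻¹ - ((m i : ℝ))⁻¹) := by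
          congr 1
          exact hvdmT (fun i => ((m i : ℝ))⁻¹)
  -- summability of c
  have hcsum : Summable c := by
    have : Summable (fun m : Fin n → ℕ+ =>
        ∑ σ : Equiv.Perm (Fin n), ((Equiv.Perm.sign σ : ℤ) : ℝ) * g σ m) :=
      summable_sum fun σ _ => ((hgsum σ).1.mul_left _)
    exact this.congr hpw1
  -- Step B+D : LHS = ∑' c
  have hdet : Matrix.det (Matrix.of fun i j : Fin n =>
      F ((i : ℕ) + 1 + ((j : ℕ) + 1) + r)) = ∑' m : Fin n → ℕ+, c m := by
    rw [Matrix.det_apply']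
    have h1 : ∀ σ : Equiv.Perm (Fin n),
        ((Equiv.Perm.sign σ : ℤ) : ℝ) *
            ∏ i, (Matrix.of fun i j : Fin n => F ((i : ℕ) + 1 + ((j : ℕ) + 1) + r)) (σ i) i
          = ∑' m : Fin n → ℕ+, ((Equiv.Perm.sign σ : ℤ) : ℝ) * g σ m := by
      intro σ
      rw [tsum_mul_left, (hgsum σ).2]
      congr 1
      refine Finset.prod_congr rfl fun i _ => ?_
      rw [Matrix.of_apply, hF _ (by omega)]
    rw [Finset.sum_congr rfl fun σ _ => h1 σ]
    rw [← Summable.tsum_finsetSum fun σ _ => ((hgsum σ).1.mul_left _)]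
    exact tsum_congr hpw1
  -- pointwise identity 2
  have hpw2 : ∀ m : Fin n → ℕ+,
      ∑ σ : Equiv.Perm (Fin n), c (fun i => m (σ i)) = T m := by
    intro m
    simp only [hc, hT]
    have halt : ∀ σ : Equiv.Perm (Fin n),
        (∏ i, ∏ j ∈ Ioi i, (((m (σ j) : ℝ))⁻¹ - ((m (σ i) : ℝ))⁻¹))
          = ((Equiv.Perm.sign σ : ℤ) : ℝ) *
              ∏ i, ∏ j ∈ Ioi i, (((m j : ℝ))⁻¹ - ((m i : ℝ))⁻¹) := by
      intro σ
      have h1 : Matrix.vandermonde (fun i => ((m (σ i) : ℝ))⁻¹)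
          = (Matrix.vandermonde (fun i => ((m i : ℝ))⁻¹)).submatrix σ id := by
        refine Matrix.ext fun a b => ?_
        rw [Matrix.vandermonde_apply, Matrix.submatrix_apply, Matrix.vandermonde_apply, id]
      have h2 := Matrix.det_permute σ (Matrix.vandermonde (fun i => ((m i : ℝ))⁻¹))
      rw [← h1, Matrix.det_vandermonde, Matrix.det_vandermonde] at h2
      simpa using h2
    have hfac : ∀ σ : Equiv.Perm (Fin n),
        (∏ i, f (m (σ i)) * ((m (σ i) : ℝ))⁻¹ ^ ((i : ℕ) + 2 + r))
          = (∏ i, f (m i) * ((m i : ℝ))⁻¹ ^ (2 + r)) *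
              ∏ i, ((m (σ i) : ℝ))⁻¹ ^ (i : ℕ) := by
      intro σ
      have hterm : ∀ i : Fin n, f (m (σ i)) * ((m (σ i) : ℝ))⁻¹ ^ ((i : ℕ) + 2 + r)
          = (f (m (σ i)) * ((m (σ i) : ℝ))⁻¹ ^ (2 + r)) * ((m (σ i) : ℝ))⁻¹ ^ (i : ℕ) := by
        intro i
        have he : (i : ℕ) + 2 + r = (2 + r) + (i : ℕ) := by omega
        rw [he, pow_add]
        ring
      rw [Finset.prod_congr rfl fun i _ => hterm i, Finset.prod_mul_distrib]
      congr 1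
      exact Equiv.prod_comp σ (fun i => f (m i) * ((m i : ℝ))⁻¹ ^ (2 + r))
    have hpair : ∀ i j : Fin n, (((m j : ℝ))⁻¹ - ((m i : ℝ))⁻¹)
        = ((m i : ℝ) - (m j : ℝ)) * (((m i : ℝ))⁻¹ * ((m j : ℝ))⁻¹) := by
      intro i j
      have hi : ((m i : ℝ)) ≠ 0 := ne_of_gt (by exact_mod_cast (m i).pos)
      have hj : ((m j : ℝ)) ≠ 0 := ne_of_gt (by exact_mod_cast (m j).pos)
      field_simp
    calc (∑ σ : Equiv.Perm (Fin n),
            (∏ i, f (m (σ i)) * ((m (σ i) : ℝ))⁻¹ ^ ((i : ℕ) + 2 + r)) *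
              ∏ i, ∏ j ∈ Ioi i, (((m (σ j) : ℝ))⁻¹ - ((m (σ i) : ℝ))⁻¹))
        = ((∏ i, f (m i) * ((m i : ℝ))⁻¹ ^ (2 + r)) *
              (∏ i, ∏ j ∈ Ioi i, (((m j : ℝ))⁻¹ - ((m i : ℝ))⁻¹))) *
            ∑ σ : Equiv.Perm (Fin n), ((Equiv.Perm.sign σ : ℤ) : ℝ) *
              ∏ i, ((m (σ i) : ℝ))⁻¹ ^ (i : ℕ) := by
          rw [Finset.mul_sum]
          refine Finset.sum_congr rfl fun σ _ => ?_
          rw [hfac σ, halt σ]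
          ring
      _ = ((∏ i, f (m i) * ((m i : ℝ))⁻¹ ^ (2 + r)) *
              (∏ i, ∏ j ∈ Ioi i, (((m j : ℝ))⁻¹ - ((m i : ℝ))⁻¹))) *
            (∏ i, ∏ j ∈ Ioi i, (((m j : ℝ))⁻¹ - ((m i : ℝ))⁻¹)) := by
          congr 1
          exact hvdm (fun i => ((m i : ℝ))⁻¹)
      _ = (∏ i, f (m i) * ((m i : ℝ))⁻¹ ^ (2 + r)) *
            ∏ i, ∏ j ∈ Ioi i,
              ((((m i : ℝ))⁻¹ ^ 2 * ((m j : ℝ))⁻¹ ^ 2) * ((m i : ℝ) - (m j : ℝ)) ^ 2) := by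
          rw [mul_assoc, ← Finset.prod_mul_distrib]
          congr 1
          refine Finset.prod_congr rfl fun i _ => ?_
          rw [← Finset.prod_mul_distrib]
          refine Finset.prod_congr rfl fun j _ => ?_
          rw [hpair i j]
          ring
      _ = (∏ i, f (m i) * ((m i : ℝ))⁻¹ ^ (2 + r)) *
            ((∏ i, ∏ j ∈ Ioi i, (((m i : ℝ))⁻¹ ^ 2 * ((m j : ℝ))⁻¹ ^ 2)) *
              ∏ i, ∏ j ∈ Ioi i, ((m i : ℝ) - (m j : ℝ)) ^ 2) := by
          congr 1
          rw [← Finset.prod_mul_distrib]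
          exact Finset.prod_congr rfl fun i _ => Finset.prod_mul_distrib
      _ = (∏ i, f (m i) * ((m i : ℝ))⁻¹ ^ (2 + r)) *
            ((∏ i, (((m i : ℝ))⁻¹ ^ 2) ^ (n - 1)) *
              ∏ i, ∏ j ∈ Ioi i, ((m i : ℝ) - (m j : ℝ)) ^ 2) := by
          congr 2
          exact prod_pairs_mul (fun i => ((m i : ℝ))⁻¹ ^ 2)
      _ = (∏ i, f (m i) / (m i : ℝ) ^ (2 * n + r)) *
            ∏ i, ∏ j ∈ Ioi i, ((m i : ℝ) - (m j : ℝ)) ^ 2 := by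
          rw [← mul_assoc, ← Finset.prod_mul_distrib]
          congr 1
          refine Finset.prod_congr rfl fun i _ => ?_
          rw [div_eq_mul_inv, ← inv_pow, ← pow_mul, mul_assoc, ← pow_add]
          congr 2
          omega
  -- assemble
  have hTsum : ∑' m : Fin n → ℕ+, T m = (n.factorial : ℝ) * ∑' m, c m := by
    have h2 : ∑' m : Fin n → ℕ+, T m
        = ∑' m : Fin n → ℕ+, ∑ σ : Equiv.Perm (Fin n), c (fun i => m (σ i)) :=
      (tsum_congr hpw2).symm
    have h3 : ∀ σ : Equiv.Perm (Fin n), Summable fun m : Fin n → ℕ+ => c (fun i => m (σ i)) :=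
      fun σ => (permPi σ).summable_iff.2 hcsum
    rw [h2, Summable.tsum_finsetSum fun σ _ => h3 σ]
    have h4 : ∀ σ : Equiv.Perm (Fin n),
        ∑' m : Fin n → ℕ+, c (fun i => m (σ i)) = ∑' m, c m := fun σ => (permPi σ).tsum_eq c
    rw [Finset.sum_congr rfl fun σ _ => h4 σ, Finset.sum_const, Finset.card_univ, nsmul_eq_mul]
    congr 2
    simp [Fintype.card_perm]
  rw [hdet]
  have h5 : tsum T = (n.factorial : ℝ) * ∑' m, c m := hTsum
  rw [h5]
  have : (n.factorial : ℝ) ≠ 0 := Nat.cast_ne_zero.2 n.factorial_ne_zero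
  field_simp
end

section
/- If f : ℕ → ℝ satisfies f(m) > 0 for every positive integer m and the Dirichlet series F(s) = ∑_{m≥1} f(m)/m^s converges absolutely for s ≥ 2, then for all n ≥ 1 and r ≥ 0 the Hankel determinant det(F(i+j+r))_{1≤i,j≤n} is strictly positive. -/
open Finset

theorem hankel_dirichlet_pos (f : ℕ → ℝ) (hf : ∀ m : ℕ, 0 < m → 0 < f m)
    (hsum : ∀ s : ℕ, 2 ≤ s → Summable (fun m : ℕ+ => f m / (m : ℝ) ^ s))
    (F : ℕ → ℝ) (hF : ∀ s : ℕ, 2 ≤ s → F s = ∑' m : ℕ+, f m / (m : ℝ) ^ s)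
    (n r : ℕ) (hn : 1 ≤ n) :
    0 < Matrix.det (Matrix.of fun i j : Fin n =>
        F ((i : ℕ) + 1 + ((j : ℕ) + 1) + r)) := by
  have hmpos : ∀ m : ℕ+, (0:ℝ) < (m:ℝ) := fun m => by exact_mod_cast m.pos
  set e : ℕ+ → Fin n → ℝ := fun m i => ((m:ℝ) ^ ((i:ℕ)+1))⁻¹ with he
  set c : ℕ+ → ℝ := fun m => f m / (m:ℝ)^r with hc
  have hcpos : ∀ m, 0 < c m := fun m => div_pos (hf m m.pos) (pow_pos (hmpos m) r)
  have key : ∀ (m : ℕ+) (i j : Fin n),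
      f m / (m:ℝ) ^ ((i:ℕ)+1+((j:ℕ)+1)+r) = c m * e m i * e m j := by
    intro m i j
    have h := (hmpos m).ne'
    field_simp [he, hc, pow_add]
    simp only [c, e]
    field_simp
    ring
  have hsumm : ∀ i j : Fin n, Summable (fun m : ℕ+ => c m * e m i * e m j) := by
    intro i j
    exact (hsum ((i:ℕ)+1+((j:ℕ)+1)+r) (by omega)).congr (fun m => key m i j)
  have hFentry : ∀ i j : Fin n,
      F ((i:ℕ)+1+((j:ℕ)+1)+r) = ∑' m : ℕ+, c m * e m i * e m j := by
    intro i j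
    rw [hF _ (by omega)]
    exact tsum_congr fun m => key m i j
  apply Matrix.PosDef.det_pos
  constructor
  · refine Matrix.ext fun i j => ?_
    simp only [Matrix.conjTranspose_apply, Matrix.of_apply, star_trivial]
    congr 1
    omega
  · intro x hx
    have hsq : ∀ m : ℕ+,
        ∑ i, ∑ j, x i * (c m * e m i * e m j) * x j
          = c m * (∑ i, x i * e m i)^2 := by
      intro m
      rw [sq, Finset.sum_mul_sum, Finset.mul_sum]
      refine Finset.sum_congr rfl fun i _ => ?_
      rw [Finset.mul_sum]
      exact Finset.sum_congr rfl fun j _ => by ring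
    have hsumm2 : Summable (fun m : ℕ+ =>
        ∑ i, ∑ j, x i * (c m * e m i * e m j) * x j) := by
      apply summable_sum
      intro i _
      apply summable_sum
      intro j _
      exact ((hsumm i j).mul_left (x i)).mul_right (x j)
    have hQsummable : Summable (fun m : ℕ+ => c m * (∑ i, x i * e m i)^2) :=
      hsumm2.congr hsq
    have hQ : dotProduct (star x)
        ((Matrix.of fun i j : Fin n => F ((i : ℕ) + 1 + ((j : ℕ) + 1) + r)).mulVec x)
        = ∑' m : ℕ+, c m * (∑ i, x i * e m i)^2 := by
      simp only [star_trivial, dotProduct, Matrix.mulVec, Matrix.of_apply]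
      calc ∑ i : Fin n, x i * ∑ j : Fin n, F ((i : ℕ) + 1 + ((j : ℕ) + 1) + r) * x j
          = ∑ i : Fin n, ∑' m : ℕ+, ∑ j : Fin n, x i * (c m * e m i * e m j) * x j := by
            refine Finset.sum_congr rfl fun i _ => ?_
            rw [Finset.mul_sum]
            have hterm : ∀ j : Fin n, x i * (F ((i:ℕ)+1+((j:ℕ)+1)+r) * x j)
                = ∑' m : ℕ+, x i * (c m * e m i * e m j) * x j := by
              intro j
              rw [hFentry i j, ← tsum_mul_right, ← tsum_mul_left]
              exact tsum_congr fun m => by ring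
            exact (Finset.sum_congr rfl fun j _ => hterm j).trans
              (Summable.tsum_finsetSum (fun j _ => ((hsumm i j).mul_left (x i)).mul_right (x j))).symm
        _ = ∑' m : ℕ+, ∑ i : Fin n, ∑ j : Fin n, x i * (c m * e m i * e m j) * x j := by
            rw [← Summable.tsum_finsetSum (fun i _ => summable_sum
              (fun j _ => ((hsumm i j).mul_left (x i)).mul_right (x j)))]
        _ = ∑' m : ℕ+, c m * (∑ i, x i * e m i)^2 := tsum_congr hsq
    rw [Finsupp.sum_fintype _ _ (by simp)]
    simp only [Finsupp.sum_fintype, star_trivial, Matrix.of_apply, zero_mul, mul_zero, Finset.sum_const_zero, implies_true]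
    have hQ' : ∑ i, ∑ j, x i * (Matrix.of fun i j : Fin n => F ((i : ℕ) + 1 + ((j : ℕ) + 1) + r)) i j * x j = dotProduct (star ⇑x)
        ((Matrix.of fun i j : Fin n => F ((i : ℕ) + 1 + ((j : ℕ) + 1) + r)).mulVec ⇑x) := by
      simp only [dotProduct, Matrix.mulVec, Finset.mul_sum, star_trivial, mul_assoc]
    simp only [Matrix.of_apply] at hQ'
    rw [hQ', hQ]
    -- find m0 with nonzero inner sum via polynomial root argument
    set p : Polynomial ℝ := ∑ i : Fin n, Polynomial.C (x i) * Polynomial.X ^ (i:ℕ) with hp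
    have hpne : p ≠ 0 := by
      obtain ⟨i0, hi0⟩ := DFunLike.ne_iff.mp hx
      intro h
      apply hi0
      have hco := congrArg (fun q => Polynomial.coeff q (i0:ℕ)) h
      simpa [hp, Polynomial.finset_sum_coeff, Polynomial.coeff_C_mul,
        Polynomial.coeff_X_pow, Fin.val_eq_val] using hco
    have hroots : {t : ℝ | p.IsRoot t}.Finite := by
      by_contra h
      exact hpne (p.eq_zero_of_infinite_isRoot h)
    have hinj : Function.Injective (fun m : ℕ+ => ((m:ℝ))⁻¹) := by
      intro a b hab
      have : ((a:ℕ):ℝ) = ((b:ℕ):ℝ) := inv_injective hab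
      exact_mod_cast this
    obtain ⟨m0, hm0⟩ : ∃ m : ℕ+, ¬ p.IsRoot ((m:ℝ))⁻¹ := by
      by_contra h
      push_neg at h
      have huniv : (fun m : ℕ+ => ((m:ℝ))⁻¹) ⁻¹' {t | p.IsRoot t} = Set.univ :=
        Set.eq_univ_of_forall h
      have : (Set.univ : Set ℕ+).Finite := by
        rw [← huniv]; exact hroots.preimage hinj.injOn
      exact Set.infinite_univ this
    have hS : (∑ i, x i * e m0 i) ≠ 0 := by
      have heval : p.eval ((m0:ℝ))⁻¹ = ∑ i : Fin n, x i * ((m0:ℝ)⁻¹)^(i:ℕ) := by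
        simp [hp, Polynomial.eval_finset_sum]
      have hfac : ∑ i, x i * e m0 i = (m0:ℝ)⁻¹ * p.eval ((m0:ℝ))⁻¹ := by
        rw [heval, Finset.mul_sum]
        refine Finset.sum_congr rfl fun i _ => ?_
        rw [he]
        simp only
        rw [pow_succ, inv_pow]
        ring
      rw [hfac]
      exact mul_ne_zero (inv_ne_zero (hmpos m0).ne') hm0
    refine Summable.tsum_pos hQsummable (fun m => mul_nonneg (hcpos m).le (sq_nonneg _)) m0 ?_
    exact mul_pos (hcpos m0) (lt_of_le_of_ne (sq_nonneg _) (Ne.symm (pow_ne_zero 2 hS)))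
end

section
/- The Selberg integral S_n(1,1,1) = ∫_{[0,1]^n} ∏_{i<j}(t_i − t_j)² dt₁⋯dt_n equals ∏_{j=1}^n ( (j−1)!² · j! / (n+j−1)! ). -/
open Finset Matrix Equiv MeasureTheory

lemma prod_nat_sub (n : ℕ) : (∏ i ∈ range n, (n - i)) = n.factorial := by
  rw [← Finset.prod_range_reflect (fun i => n - i) n, ← Finset.prod_range_add_one_eq_factorial n]
  apply Finset.prod_congr rfl
  intro i hi
  have := mem_range.mp hi
  omega

lemma prod_fin_sub (n : ℕ) : (∏ i : Fin n, ((n : ℝ) - (i : ℕ))) = n.factorial := by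
  rw [Fin.prod_univ_eq_prod_range (fun i => (n : ℝ) - i)]
  have h : ∀ i ∈ range n, ((n : ℝ) - (i:ℕ)) = ((n - i : ℕ) : ℝ) := by
    intro i hi
    have := (mem_range.mp hi).le
    push_cast [Nat.cast_sub this]
    ring
  rw [Finset.prod_congr rfl h, ← Nat.cast_prod, prod_nat_sub]

lemma prod_nat_add (m k : ℕ) : (∏ i ∈ range k, (i + m + 1)) * m.factorial
    = (m + k).factorial := by
  induction k with
  | zero => simp
  | succ k ih =>
    rw [prod_range_succ, mul_right_comm, ih]
    have h2 : m + (k+1) = (m + k) + 1 := by ring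
    rw [h2, Nat.factorial_succ]
    ring

lemma prod_fin_add (m k : ℕ) : (∏ i : Fin k, (((i:ℕ) + m + 1 : ℕ) : ℝ)) * m.factorial
    = ((m + k).factorial : ℝ) := by
  rw [Fin.prod_univ_eq_prod_range (fun i => ((i + m + 1 : ℕ) : ℝ)), ← Nat.cast_prod, ← Nat.cast_mul,
    prod_nat_add]

noncomputable def Cmat (n : ℕ) : Matrix (Fin n) (Fin n) ℝ :=
  Matrix.of fun i j => (((i : ℕ) + (j : ℕ) + 1 : ℕ) : ℝ)⁻¹

lemma Cmat_det_succ (n : ℕ) :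
    (Cmat (n+1)).det =
      ((∏ i : Fin n, ((n:ℝ) - (i:ℕ)))^2 * (∏ j : Fin (n+1), (((n:ℕ)+(j:ℕ)+1:ℕ):ℝ)⁻¹) *
        (∏ i : Fin n, (((i:ℕ)+(n:ℕ)+1:ℕ):ℝ)⁻¹)) * (Cmat n).det := by
  set L : Fin (n+1) := Fin.last n with hL
  have hvalL : (L : ℕ) = n := rfl
  set B2 : Matrix (Fin (n+1)) (Fin (n+1)) ℝ :=
    Matrix.of (fun i j => if i = L then 1 else (((i:ℕ)+(j:ℕ)+1:ℕ):ℝ)⁻¹) with hB2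
  set B4 : Matrix (Fin (n+1)) (Fin (n+1)) ℝ :=
    Matrix.of (fun i j => if j = L then 1 else if i = L then 0 else (((i:ℕ)+(j:ℕ)+1:ℕ):ℝ)⁻¹)
    with hB4
  set v : Fin (n+1) → ℝ := fun i => if i = L then 1 else ((n:ℝ) - (i:ℕ)) with hv
  set w : Fin (n+1) → ℝ := fun j => (((n:ℕ)+(j:ℕ)+1:ℕ):ℝ)⁻¹ with hw
  set z : Fin (n+1) → ℝ := fun i => if i = L then 1 else (((i:ℕ)+(n:ℕ)+1:ℕ):ℝ)⁻¹ with hz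
  -- step 1 : row operations then factor
  have h1 : (Cmat (n+1)).det = (Matrix.of fun i j => v i * (w j * B2 i j)).det := by
    apply Matrix.det_eq_of_forall_row_eq_smul_add_const
      (fun i => if i = L then 0 else 1) L (if_pos rfl)
    intro i j
    by_cases hi : i = L
    · subst hi
      simp [hB2, hv, hw, Cmat, hvalL]
    · have d1 : ((((i:ℕ)+(j:ℕ)+1:ℕ)):ℝ) ≠ 0 := Nat.cast_ne_zero.mpr (by omega)
      have d2 : (((n+(j:ℕ)+1:ℕ)):ℝ) ≠ 0 := Nat.cast_ne_zero.mpr (by omega)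
      simp [hB2, hv, hw, Cmat, hi, hvalL]
      field_simp
      push_cast
      ring
  have h1' : (Matrix.of fun i j => v i * (w j * B2 i j)).det
      = (∏ i, v i) * ((∏ j, w j) * B2.det) := by
    exact (Matrix.det_mul_column v (Matrix.of fun i j => w j * B2 i j)).trans
      (congrArg ((∏ i, v i) * ·) (Matrix.det_mul_row w B2))
  -- step 2 : column operations (as row ops on transpose) then factor
  have h2 : B2.det = (Matrix.of fun j i => v j * (z i * B4ᵀ j i)).det := by
    rw [← Matrix.det_transpose B2]
    apply Matrix.det_eq_of_forall_row_eq_smul_add_const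
      (fun j => if j = L then 0 else 1) L (if_pos rfl)
    intro j i
    by_cases hj : j = L
    · subst hj
      by_cases hi : i = L
      · simp [hB2, hB4, hv, hz, hi]
      · simp [hB2, hB4, hv, hz, hi, hvalL, Nat.add_comm (i:ℕ) n]
    · by_cases hi : i = L
      · simp [hB2, hB4, hv, hz, hi, hj, hvalL]
      · have d1 : ((((i:ℕ)+(j:ℕ)+1:ℕ)):ℝ) ≠ 0 := Nat.cast_ne_zero.mpr (by omega)
        have d2 : ((((i:ℕ)+n+1:ℕ)):ℝ) ≠ 0 := Nat.cast_ne_zero.mpr (by omega)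
        simp [hB2, hB4, hv, hz, hi, hj, hvalL]
        field_simp
        push_cast
        ring
  have h2' : (Matrix.of fun j i => v j * (z i * B4ᵀ j i)).det
      = (∏ j, v j) * ((∏ i, z i) * B4.det) := by
    exact (Matrix.det_mul_column v (Matrix.of fun j i => z i * B4ᵀ j i)).trans
      (congrArg ((∏ j, v j) * ·)
        ((Matrix.det_mul_row z B4ᵀ).trans (congrArg _ (Matrix.det_transpose B4))))
  -- step 3 : expand along last row
  have h3 : B4.det = (Cmat n).det := by
    rw [Matrix.det_succ_row B4 L]
    have hrow : ∀ j, B4 L j = if j = L then 1 else 0 := by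
      intro j
      by_cases hj : j = L <;> simp [hB4, hj]
    rw [Finset.sum_eq_single L]
    · rw [hrow, if_pos rfl, mul_one]
      have hpow : ((-1 : ℝ)) ^ ((L:ℕ) + (L:ℕ)) = 1 := by
        rw [hvalL]
        exact Even.neg_one_pow ⟨n, rfl⟩
      rw [hpow, one_mul]
      congr 1
      ext i j
      have hsA : L.succAbove = Fin.castSucc := Fin.succAbove_last
      simp only [Matrix.submatrix_apply, hsA]
      have hiL : Fin.castSucc i ≠ L := Fin.ne_last_of_lt (Fin.castSucc_lt_last i)
      have hjL : Fin.castSucc j ≠ L := Fin.ne_last_of_lt (Fin.castSucc_lt_last j)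
      simp [hB4, hiL, hjL, Cmat]
    · intro j _ hj
      rw [hrow, if_neg hj]
      ring
    · intro h
      exact absurd (Finset.mem_univ L) h
  -- assemble
  rw [h1, h1', h2, h2', h3]
  have hvprod : (∏ i, v i) = ∏ i : Fin n, ((n:ℝ) - (i:ℕ)) := by
    rw [Fin.prod_univ_castSucc]
    have : v L = 1 := if_pos rfl
    rw [this, mul_one]
    apply Finset.prod_congr rfl
    intro i _
    have hiL : Fin.castSucc i ≠ L := Fin.ne_last_of_lt (Fin.castSucc_lt_last i)
    simp [hv, hiL]
  have hzprod : (∏ i, z i) = ∏ i : Fin n, (((i:ℕ)+(n:ℕ)+1:ℕ):ℝ)⁻¹ := by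
    rw [Fin.prod_univ_castSucc]
    have : z L = 1 := if_pos rfl
    rw [this, mul_one]
    apply Finset.prod_congr rfl
    intro i _
    have hiL : Fin.castSucc i ≠ L := Fin.ne_last_of_lt (Fin.castSucc_lt_last i)
    simp [hz, hiL]
  rw [hvprod, hzprod]
  ring
lemma Cmat_det (n : ℕ) :
    (Cmat n).det = ∏ j ∈ range n,
      ((j.factorial : ℝ)^4 / ((2*j).factorial * (2*j+1).factorial)) := by
  induction n with
  | zero => simp [Matrix.det_isEmpty]
  | succ n ih =>
    rw [Cmat_det_succ n, ih, prod_range_succ]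
    have ha : ((n.factorial : ℝ)) ≠ 0 := Nat.cast_ne_zero.mpr n.factorial_ne_zero
    have hb : (((2*n).factorial : ℝ)) ≠ 0 := Nat.cast_ne_zero.mpr (2*n).factorial_ne_zero
    have hc : (((2*n+1).factorial : ℝ)) ≠ 0 := Nat.cast_ne_zero.mpr (2*n+1).factorial_ne_zero
    have hW : (∏ j : Fin (n+1), (((n:ℕ)+(j:ℕ)+1:ℕ):ℝ)⁻¹)
        = (n.factorial : ℝ) / ((2*n+1).factorial : ℝ) := by
      rw [Finset.prod_inv_distrib]
      have h1 : (∏ j : Fin (n+1), (((n:ℕ)+(j:ℕ)+1:ℕ):ℝ))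
          = (∏ j : Fin (n+1), (((j:ℕ)+(n:ℕ)+1:ℕ):ℝ)) := by
        apply Finset.prod_congr rfl
        intro j _
        congr 1
        omega
      rw [h1]
      have h2 := prod_fin_add n (n+1)
      have h3 : n + (n + 1) = 2*n+1 := by ring
      rw [h3] at h2
      rw [(eq_div_iff ha).mpr h2, inv_div]
    have hZ : (∏ i : Fin n, (((i:ℕ)+(n:ℕ)+1:ℕ):ℝ)⁻¹)
        = (n.factorial : ℝ) / ((2*n).factorial : ℝ) := by
      rw [Finset.prod_inv_distrib]
      have h2 := prod_fin_add n n
      have h3 : n + n = 2*n := by ring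
      rw [h3] at h2
      rw [(eq_div_iff ha).mpr h2, inv_div]
    rw [prod_fin_sub, hW, hZ]
    field_simp
noncomputable def eps {n : ℕ} (σ : Perm (Fin n)) : ℝ := ((Perm.sign σ : ℤ) : ℝ)

lemma perm_sum_eq (n : ℕ) :
    (∑ σ : Perm (Fin n), ∑ τ : Perm (Fin n), eps σ * eps τ *
        ∏ i : Fin n, ((((σ⁻¹ i : Fin n) : ℕ) + ((τ⁻¹ i : Fin n) : ℕ) + 1 : ℕ) : ℝ)⁻¹)
      = (n.factorial : ℝ) * (Cmat n).det := by
  have heps_inv : ∀ σ : Perm (Fin n), eps σ⁻¹ = eps σ := by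
    intro σ; unfold eps; rw [Equiv.Perm.sign_inv]
  have heps_mul : ∀ σ τ : Perm (Fin n), eps (σ * τ) = eps σ * eps τ := by
    intro σ τ; unfold eps; rw [_root_.map_mul]; push_cast; ring
  have heps_sq : ∀ σ : Perm (Fin n), eps σ * eps σ = 1 := by
    intro σ; unfold eps
    rw [← Int.cast_mul, ← Units.val_mul, Int.units_mul_self]
    simp
  -- remove the inverses
  have h1 : (∑ σ : Perm (Fin n), ∑ τ : Perm (Fin n), eps σ * eps τ *
        ∏ i : Fin n, ((((σ⁻¹ i : Fin n) : ℕ) + ((τ⁻¹ i : Fin n) : ℕ) + 1 : ℕ) : ℝ)⁻¹)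
      = ∑ σ : Perm (Fin n), ∑ τ : Perm (Fin n), eps σ * eps τ *
        ∏ i : Fin n, ((((σ i : Fin n) : ℕ) + ((τ i : Fin n) : ℕ) + 1 : ℕ) : ℝ)⁻¹ := by
    rw [← Equiv.sum_comp (Equiv.inv (Perm (Fin n)))
      (fun σ => ∑ τ : Perm (Fin n), eps σ * eps τ *
        ∏ i : Fin n, ((((σ i : Fin n) : ℕ) + ((τ i : Fin n) : ℕ) + 1 : ℕ) : ℝ)⁻¹)]
    apply Finset.sum_congr rfl
    intro σ _
    rw [← Equiv.sum_comp (Equiv.inv (Perm (Fin n)))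
      (fun τ => eps (Equiv.inv (Perm (Fin n)) σ) * eps τ *
        ∏ i : Fin n, ((((Equiv.inv (Perm (Fin n)) σ i : Fin n) : ℕ) + ((τ i : Fin n) : ℕ) + 1 : ℕ) : ℝ)⁻¹)]
    apply Finset.sum_congr rfl
    intro τ _
    simp only [Equiv.inv_apply]
    rw [heps_inv, heps_inv]
  rw [h1]
  -- reindex the product and the inner sum
  have h2 : ∀ σ τ : Perm (Fin n),
      (∏ i : Fin n, ((((σ i : Fin n) : ℕ) + ((τ i : Fin n) : ℕ) + 1 : ℕ) : ℝ)⁻¹ : ℝ)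
        = ∏ i : Fin n, ((((i : Fin n) : ℕ) + (((τ * σ⁻¹) i : Fin n) : ℕ) + 1 : ℕ) : ℝ)⁻¹ := by
    intro σ τ
    rw [← Equiv.prod_comp σ
      (fun j : Fin n => ((((j : Fin n) : ℕ) + (((τ * σ⁻¹) j : Fin n) : ℕ) + 1 : ℕ) : ℝ)⁻¹)]
    apply Finset.prod_congr rfl
    intro i _
    simp [Perm.mul_apply]
  have h3 : ∀ σ : Perm (Fin n),
      (∑ τ : Perm (Fin n), eps σ * eps τ *
        ∏ i : Fin n, ((((σ i : Fin n) : ℕ) + ((τ i : Fin n) : ℕ) + 1 : ℕ) : ℝ)⁻¹ : ℝ)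
      = ∑ ρ : Perm (Fin n), eps σ * (eps ρ * eps σ) *
          ∏ i : Fin n, ((((i : Fin n) : ℕ) + ((ρ i : Fin n) : ℕ) + 1 : ℕ) : ℝ)⁻¹ := by
    intro σ
    rw [← Equiv.sum_comp (Equiv.mulRight σ)
      (fun τ => eps σ * eps τ *
        ∏ i : Fin n, ((((σ i : Fin n) : ℕ) + ((τ i : Fin n) : ℕ) + 1 : ℕ) : ℝ)⁻¹)]
    apply Finset.sum_congr rfl
    intro ρ _
    simp only [Equiv.coe_mulRight]
    rw [h2 σ (ρ * σ), heps_mul, mul_inv_cancel_right]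
  simp only [h3]
  have h4 : ∀ σ : Perm (Fin n), ∑ ρ : Perm (Fin n), eps σ * (eps ρ * eps σ) *
          ∏ i : Fin n, ((((i : Fin n) : ℕ) + ((ρ i : Fin n) : ℕ) + 1 : ℕ) : ℝ)⁻¹
      = ∑ ρ : Perm (Fin n), eps ρ *
          ∏ i : Fin n, ((((i : Fin n) : ℕ) + ((ρ i : Fin n) : ℕ) + 1 : ℕ) : ℝ)⁻¹ := by
    intro σ
    apply Finset.sum_congr rfl
    intro ρ _
    have h5 : eps σ * (eps ρ * eps σ) = eps ρ := by
      rw [mul_comm (eps ρ) (eps σ), ← mul_assoc, heps_sq, one_mul]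
    rw [h5]
  simp only [h4]
  rw [Finset.sum_const, Finset.card_univ, Fintype.card_perm, Fintype.card_fin, nsmul_eq_mul]
  congr 1
  rw [Matrix.det_apply']
  apply Finset.sum_congr rfl
  intro ρ _
  unfold eps
  congr 1
  apply Finset.prod_congr rfl
  intro i _
  simp only [Cmat, Matrix.of_apply]
  congr 2
  omega
lemma prod_range_double (m : ℕ) (f : ℕ → ℕ) :
    ∏ k ∈ range (m+m), f k = ∏ j ∈ range m, (f (2*j) * f (2*j+1)) := by
  induction m with
  | zero => simp
  | succ m ih =>
    have h : m + 1 + (m + 1) = (m + m) + 1 + 1 := by ring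
    rw [h, prod_range_succ, prod_range_succ, ih, prod_range_succ]
    have e1 : m + m = 2*m := by ring
    rw [e1]
    ring

lemma nat_id (n : ℕ) : ∏ j ∈ range n, (j.factorial * (n+j).factorial)
    = ∏ j ∈ range n, ((2*j).factorial * (2*j+1).factorial) := by
  rw [← prod_range_double n Nat.factorial, Finset.prod_range_add Nat.factorial n n,
    ← Finset.prod_mul_distrib]

lemma nat_id2 (n : ℕ) :
    n.factorial * (∏ j ∈ range n, j.factorial^4) * (∏ j ∈ range n, (n+j).factorial)
    = (∏ j ∈ range n, j.factorial^2 * (j+1).factorial) *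
      ∏ j ∈ range n, ((2*j).factorial * (2*j+1).factorial) := by
  rw [← nat_id, ← prod_range_add_one_eq_factorial, ← Finset.prod_mul_distrib,
      ← Finset.prod_mul_distrib, ← Finset.prod_mul_distrib]
  apply Finset.prod_congr rfl
  intro j _
  rw [Nat.factorial_succ]
  ring

lemma final_arith (n : ℕ) :
    (n.factorial : ℝ) *
        ∏ j ∈ range n, ((j.factorial : ℝ)^4 / ((2*j).factorial * (2*j+1).factorial))
      = ∏ j ∈ range n,
        ((j.factorial : ℝ) ^ 2 * ((j + 1).factorial : ℝ) / ((n + j).factorial : ℝ)) := by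
  rw [Finset.prod_div_distrib, Finset.prod_div_distrib]
  have hb : (∏ j ∈ range n, (((2*j).factorial : ℝ) * ((2*j+1).factorial : ℝ))) ≠ 0 :=
    ne_of_gt (Finset.prod_pos fun j _ => by positivity)
  have hd : (∏ j ∈ range n, (((n+j).factorial : ℝ))) ≠ 0 :=
    ne_of_gt (Finset.prod_pos fun j _ => by positivity)
  rw [mul_div_assoc', div_eq_div_iff hb hd]
  exact_mod_cast congrArg (Nat.cast : ℕ → ℝ) (nat_id2 n)
lemma integral_Icc_pow (k : ℕ) :
    (∫ x : ℝ, (Set.Icc (0:ℝ) 1).indicator (fun y => y ^ k) x) = ((k+1 : ℕ) : ℝ)⁻¹ := by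
  rw [MeasureTheory.integral_indicator measurableSet_Icc,
    MeasureTheory.integral_Icc_eq_integral_Ioc,
    ← intervalIntegral.integral_of_le zero_le_one, integral_pow]
  push_cast
  simp

lemma integral_monomial (n : ℕ) (a : Fin n → ℕ) :
    (∫ t in Set.pi Set.univ (fun _ : Fin n => Set.Icc (0 : ℝ) 1), ∏ i, t i ^ a i)
      = ∏ i, ((a i + 1 : ℕ) : ℝ)⁻¹ := by
  rw [← MeasureTheory.integral_indicator (MeasurableSet.univ_pi fun _ => measurableSet_Icc)]
  have hind : (Set.pi Set.univ fun _ : Fin n => Set.Icc (0:ℝ) 1).indicator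
      (fun t => ∏ i, t i ^ a i)
      = fun t => ∏ i, (Set.Icc (0:ℝ) 1).indicator (fun x => x ^ a i) (t i) := by
    ext t
    by_cases ht : t ∈ Set.pi Set.univ fun _ : Fin n => Set.Icc (0:ℝ) 1
    · rw [Set.indicator_of_mem ht]
      exact Finset.prod_congr rfl fun i _ =>
        (Set.indicator_of_mem (ht i (Set.mem_univ i)) _).symm
    · rw [Set.indicator_of_notMem ht]
      rw [Set.mem_univ_pi] at ht
      push_neg at ht
      obtain ⟨i, hi⟩ := ht
      exact (Finset.prod_eq_zero (Finset.mem_univ i)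
        (Set.indicator_of_notMem hi _)).symm
  rw [hind,
    MeasureTheory.integral_fintype_prod_volume_eq_prod (ι := Fin n)
      (fun i x => (Set.Icc (0:ℝ) 1).indicator (fun y => y ^ a i) x)]
  exact Finset.prod_congr rfl fun i _ => integral_Icc_pow (a i)
lemma perm_sum_eq' (n : ℕ) :
    (∑ p : Perm (Fin n) × Perm (Fin n), eps p.1 * eps p.2 *
        ∏ i : Fin n, ((((p.1⁻¹ i : Fin n) : ℕ) + ((p.2⁻¹ i : Fin n) : ℕ) + 1 : ℕ) : ℝ)⁻¹)
      = (n.factorial : ℝ) * (Cmat n).det := by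
  rw [Fintype.sum_prod_type]
  exact perm_sum_eq n




theorem selberg_integral_111 (n : ℕ) (hn : 1 ≤ n) :
    (∫ t in Set.pi Set.univ (fun _ : Fin n => Set.Icc (0 : ℝ) 1),
        ∏ i, ∏ j ∈ Finset.Ioi i, (t i - t j) ^ 2) =
      ∏ j ∈ Finset.range n,
        ((j.factorial : ℝ) ^ 2 * ((j + 1).factorial : ℝ) / ((n + j).factorial : ℝ)) := by
  have hre : ∀ (σ : Perm (Fin n)) (t : Fin n → ℝ),
      (∏ i : Fin n, t (σ i) ^ (i : ℕ)) = ∏ i : Fin n, t i ^ ((σ⁻¹ i : Fin n) : ℕ) := by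
    intro σ t
    rw [← Equiv.prod_comp σ (fun i => t i ^ ((σ⁻¹ i : Fin n) : ℕ))]
    apply Finset.prod_congr rfl
    intro i _
    rw [← Perm.mul_apply, inv_mul_cancel, Perm.one_apply]
  have hexp : ∀ t : Fin n → ℝ,
      (∏ i, ∏ j ∈ Finset.Ioi i, (t i - t j) ^ 2)
        = ∑ p : Perm (Fin n) × Perm (Fin n), eps p.1 * eps p.2 *
            ∏ i : Fin n, t i ^ (((p.1⁻¹ i : Fin n) : ℕ) + ((p.2⁻¹ i : Fin n) : ℕ)) := by
    intro t
    have h1 : (∏ i, ∏ j ∈ Finset.Ioi i, (t i - t j) ^ 2)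
        = ((Matrix.vandermonde t).det) ^ 2 := by
      rw [Matrix.det_vandermonde, ← Finset.prod_pow]
      apply Finset.prod_congr rfl
      intro i _
      rw [← Finset.prod_pow]
      apply Finset.prod_congr rfl
      intro j _
      rw [← neg_sub (t j) (t i), neg_sq]
    rw [h1, Matrix.det_apply', pow_two, Finset.sum_mul_sum, Fintype.sum_prod_type]
    apply Finset.sum_congr rfl
    intro σ _
    apply Finset.sum_congr rfl
    intro τ _
    set p : Perm (Fin n) × Perm (Fin n) := (σ, τ) with hp
    show _ = eps p.1 * eps p.2 * ∏ i : Fin n, t i ^ (((p.1⁻¹ i : Fin n) : ℕ) + ((p.2⁻¹ i : Fin n) : ℕ))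
    have hp1 : p.1 = σ := rfl
    have hp2 : p.2 = τ := rfl
    rw [hp1, hp2]
    simp only [Matrix.vandermonde_apply]
    rw [hre p.1 t, hre p.2 t, mul_mul_mul_comm, ← Finset.prod_mul_distrib]
    congr 1
    apply Finset.prod_congr rfl
    intro i _
    rw [← pow_add]
  simp only [hexp]
  rw [MeasureTheory.integral_finset_sum]
  · have hterm : ∀ p : Perm (Fin n) × Perm (Fin n),
        (∫ t in Set.pi Set.univ (fun _ : Fin n => Set.Icc (0 : ℝ) 1),
          eps p.1 * eps p.2 *
            ∏ i : Fin n, t i ^ (((p.1⁻¹ i : Fin n) : ℕ) + ((p.2⁻¹ i : Fin n) : ℕ)))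
        = eps p.1 * eps p.2 *
            ∏ i : Fin n, ((((p.1⁻¹ i : Fin n) : ℕ) + ((p.2⁻¹ i : Fin n) : ℕ) + 1 : ℕ) : ℝ)⁻¹ := by
      intro p
      rw [MeasureTheory.integral_const_mul, integral_monomial]
    simp only [hterm]
    rw [perm_sum_eq', Cmat_det, final_arith]
  · intro p _
    apply ContinuousOn.integrableOn_compact (isCompact_univ_pi fun _ => isCompact_Icc)
    apply Continuous.continuousOn
    exact continuous_const.mul
      (continuous_finset_prod _ fun i _ => (continuous_apply i).pow _)
end

section
/- Define ρ : ℝ → ℝ by ρ(x) = 1 for 0 ≤ x ≤ 1/2, ρ(x) = (2/π)(arctan(1/√(2x−1)) − √(2x−1)/(2x)) for x > 1/2, and ρ(x) = 0 for x < 0. Then ∫_0^∞ ρ(x) dx = 1. -/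
open Real MeasureTheory Filter Set

noncomputable def rho : ℝ → ℝ := fun x =>
  if x < 0 then 0
  else if x ≤ 1 / 2 then 1
  else (2 / Real.pi) * (Real.arctan (1 / Real.sqrt (2 * x - 1)) - Real.sqrt (2 * x - 1) / (2 * x))

lemma arctan_le_self' {u : ℝ} (hu : 0 ≤ u) : Real.arctan u ≤ u := by
  have h : ∀ x : ℝ, HasDerivAt (fun y => y - Real.arctan y) (1 - 1/(1+x^2)) x :=
    fun x => (hasDerivAt_id x).sub (Real.hasDerivAt_arctan x)
  have hm : MonotoneOn (fun y => y - Real.arctan y) (Set.Ici 0) := by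
    apply monotoneOn_of_deriv_nonneg (convex_Ici 0)
      (Continuous.continuousOn (by continuity))
      (fun x _ => (h x).differentiableAt.differentiableWithinAt)
    intro x _
    rw [(h x).deriv]
    have h1 : (0:ℝ) < 1 + x^2 := by positivity
    have : 1/(1+x^2) ≤ 1 := by
      rw [div_le_one h1]; nlinarith
    linarith
  have := hm (Set.self_mem_Ici) hu hu
  simp [Real.arctan_zero] at this
  linarith

lemma le_arctan' {u : ℝ} (hu : 0 ≤ u) : u / (1 + u^2) ≤ Real.arctan u := by
  have h : ∀ x : ℝ, HasDerivAt (fun y => Real.arctan y - y/(1+y^2))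
      (1/(1+x^2) - ((1*(1+x^2) - x*(2*x))/(1+x^2)^2)) x := by
    intro x
    have h1 : (0:ℝ) < 1 + x^2 := by positivity
    have hq : HasDerivAt (fun y : ℝ => 1 + y^2) (2*x) x := by
      simpa using (hasDerivAt_pow 2 x).const_add (1:ℝ)
    have hd := (hasDerivAt_id x).div hq h1.ne'
    exact (Real.hasDerivAt_arctan x).sub ((hasDerivAt_id' x).div hq h1.ne')
  have hc : Continuous fun y : ℝ => Real.arctan y - y/(1+y^2) := by
    apply Real.continuous_arctan.sub
    exact continuous_id.div (by continuity) (fun x => by positivity)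
  have hm : MonotoneOn (fun y => Real.arctan y - y/(1+y^2)) (Set.Ici 0) := by
    apply monotoneOn_of_deriv_nonneg (convex_Ici 0) hc.continuousOn
      (fun x _ => (h x).differentiableAt.differentiableWithinAt)
    intro x _
    rw [(h x).deriv]
    have h1 : (0:ℝ) < 1 + x^2 := by positivity
    rw [div_sub_div _ _ h1.ne' (by positivity : ((1+x^2)^2:ℝ) ≠ 0)]
    apply div_nonneg _ (by positivity)
    nlinarith
  have := hm (Set.self_mem_Ici) hu hu
  simp [Real.arctan_zero] at this
  linarith

noncomputable def Grho : ℝ → ℝ := fun x =>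
  Real.pi * x / 2 - (x - 1) * Real.arctan (Real.sqrt (2 * x - 1)) - Real.sqrt (2 * x - 1) / 2

lemma Grho_deriv {x : ℝ} (hx : 1/2 < x) :
    HasDerivAt Grho (Real.arctan (1 / Real.sqrt (2 * x - 1)) - Real.sqrt (2 * x - 1) / (2 * x)) x := by
  set s := Real.sqrt (2 * x - 1) with hs_def
  have h2x : (0:ℝ) < 2 * x - 1 := by linarith
  have hs : 0 < s := Real.sqrt_pos.2 h2x
  have hs2 : s ^ 2 = 2 * x - 1 := Real.sq_sqrt h2x.le
  have hl : HasDerivAt (fun y : ℝ => 2 * y - 1) 2 x := by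
    simpa using ((hasDerivAt_id x).const_mul (2:ℝ)).sub_const 1
  have hsq : HasDerivAt (fun y : ℝ => Real.sqrt (2 * y - 1)) (1 / (2 * s) * 2) x := by
    exact (Real.hasDerivAt_sqrt h2x.ne').comp x hl
  have harc : HasDerivAt (fun y : ℝ => Real.arctan (Real.sqrt (2 * y - 1)))
      (1 / (1 + s ^ 2) * (1 / (2 * s) * 2)) x := by
    have := (Real.hasDerivAt_arctan s).comp x hsq; exact this
  have h1 : HasDerivAt (fun y : ℝ => Real.pi * y / 2) (Real.pi / 2) x := by
    simpa using ((hasDerivAt_id x).const_mul Real.pi).div_const 2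
  have h2 : HasDerivAt (fun y : ℝ => (y - 1) * Real.arctan (Real.sqrt (2 * y - 1)))
      (1 * Real.arctan s + (x - 1) * (1 / (1 + s ^ 2) * (1 / (2 * s) * 2))) x :=
    ((hasDerivAt_id x).sub_const 1).mul harc
  have hG := (h1.sub h2).sub (hsq.div_const 2)
  have harctan_inv : Real.arctan (1 / s) = Real.pi / 2 - Real.arctan s := by
    rw [one_div]; exact Real.arctan_inv_of_pos hs
  refine hG.congr_deriv ?_
  have hx0 : (0:ℝ) < x := by linarith
  have h2xeq : (1:ℝ) + s^2 = 2*x := by linarith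
  rw [harctan_inv, h2xeq]
  have key : s/(2*x) = (x-1)*(1/(2*x) * (1/(2*s)*2)) + 1/(2*s)*2/2 := by
    field_simp
    linear_combination hs2
  ring_nf
  ring_nf at key
  linarith [key]

lemma Grho_cont : Continuous Grho := by
  unfold Grho
  have h1 : Continuous fun x : ℝ => Real.sqrt (2 * x - 1) :=
    Real.continuous_sqrt.comp (by continuity)
  exact (((continuous_const.mul continuous_id).div_const 2).sub
    ((continuous_id.sub continuous_const).mul (Real.continuous_arctan.comp h1))).sub
    (h1.div_const 2)

lemma rho_nonneg' {x : ℝ} (hx : 1/2 < x) :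
    0 ≤ Real.arctan (1 / Real.sqrt (2 * x - 1)) - Real.sqrt (2 * x - 1) / (2 * x) := by
  set s := Real.sqrt (2 * x - 1) with hs_def
  have h2x : (0:ℝ) < 2 * x - 1 := by linarith
  have hs : 0 < s := Real.sqrt_pos.2 h2x
  have hs2 : s ^ 2 = 2 * x - 1 := Real.sq_sqrt h2x.le
  have hx0 : (0:ℝ) < x := by linarith
  have hle := le_arctan' (le_of_lt (by positivity : (0:ℝ) < 1/s))
  have key : (1/s) / (1 + (1/s)^2) = s / (2*x) := by
    field_simp
    linear_combination (-1) * hs2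
  linarith [key ▸ hle]

lemma Grho_tendsto : Tendsto Grho atTop (nhds (Real.pi / 2)) := by
  have hs_top : Tendsto (fun x : ℝ => Real.sqrt (2 * x - 1)) atTop atTop := by
    apply Filter.tendsto_atTop.2
    intro b
    filter_upwards [Filter.eventually_ge_atTop ((b^2+1)/2)] with x hx
    have h1 : b^2 ≤ 2*x-1 := by linarith
    calc b ≤ |b| := le_abs_self b
      _ = Real.sqrt (b^2) := (Real.sqrt_sq_eq_abs b).symm
      _ ≤ Real.sqrt (2*x-1) := Real.sqrt_le_sqrt h1
  have hinv : Tendsto (fun x : ℝ => (Real.sqrt (2 * x - 1))⁻¹) atTop (nhds 0) :=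
    hs_top.inv_tendsto_atTop
  have hL : Tendsto (fun x : ℝ => Real.pi / 2 - (Real.sqrt (2 * x - 1))⁻¹) atTop
      (nhds (Real.pi / 2)) := by
    simpa using tendsto_const_nhds.sub hinv
  apply tendsto_of_tendsto_of_tendsto_of_le_of_le' hL
    (tendsto_const_nhds : Tendsto (fun _ : ℝ => Real.pi / 2) atTop (nhds (Real.pi / 2)))
  · -- lower bound eventually
    filter_upwards [Filter.eventually_ge_atTop (1:ℝ)] with x hx1
    set s := Real.sqrt (2 * x - 1) with hs_def
    have h2x : (0:ℝ) < 2 * x - 1 := by linarith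
    have hs : 0 < s := Real.sqrt_pos.2 h2x
    have hs2 : s ^ 2 = 2 * x - 1 := Real.sq_sqrt h2x.le
    have hx0 : (0:ℝ) < x := by linarith
    have harctan_inv : Real.arctan s = Real.pi / 2 - Real.arctan s⁻¹ := by
      have := Real.arctan_inv_of_pos hs
      linarith
    have hle := le_arctan' (le_of_lt (by positivity : (0:ℝ) < s⁻¹))
    have key : s⁻¹ / (1 + (s⁻¹)^2) = s / (2*x) := by
      field_simp
      linear_combination (-1) * hs2
    rw [key] at hle
    -- Grho x = π/2 + (x-1) * arctan s⁻¹ - s/2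
    have hG : Grho x = Real.pi / 2 + (x - 1) * Real.arctan s⁻¹ - s / 2 := by
      unfold Grho
      rw [← hs_def, harctan_inv]
      ring
    rw [hG]
    have h1 : (x - 1) * (s / (2*x)) ≤ (x - 1) * Real.arctan s⁻¹ :=
      mul_le_mul_of_nonneg_left hle (by linarith)
    have e : (x - 1) * (s / (2*x)) = s/2 - s/(2*x) := by
      field_simp
    have h2 : s / (2*x) ≤ s⁻¹ := by
      rw [inv_eq_one_div, div_le_div_iff₀ (by positivity) hs]
      nlinarith [hs2]
    linarith
  · -- upper bound eventually
    filter_upwards [Filter.eventually_ge_atTop (1:ℝ)] with x hx1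
    set s := Real.sqrt (2 * x - 1) with hs_def
    have h2x : (0:ℝ) < 2 * x - 1 := by linarith
    have hs : 0 < s := Real.sqrt_pos.2 h2x
    have hs2 : s ^ 2 = 2 * x - 1 := Real.sq_sqrt h2x.le
    have hx0 : (0:ℝ) < x := by linarith
    have harctan_inv : Real.arctan s = Real.pi / 2 - Real.arctan s⁻¹ := by
      have := Real.arctan_inv_of_pos hs
      linarith
    have hle := arctan_le_self' (le_of_lt (by positivity : (0:ℝ) < s⁻¹))
    have hG : Grho x = Real.pi / 2 + (x - 1) * Real.arctan s⁻¹ - s / 2 := by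
      unfold Grho
      rw [← hs_def, harctan_inv]
      ring
    rw [hG]
    have h1 : (x - 1) * Real.arctan s⁻¹ ≤ (x - 1) * s⁻¹ :=
      mul_le_mul_of_nonneg_left hle (by linarith)
    have h2 : (x - 1) * s⁻¹ ≤ s / 2 := by
      rw [inv_eq_one_div, mul_one_div, div_le_div_iff₀ hs (by norm_num : (0:ℝ) < 2)]
      nlinarith [hs2]
    linarith

theorem rho_integral_one : ∫ x in Set.Ioi (0 : ℝ), rho x = 1 := by
  have hpi : (0:ℝ) < Real.pi := Real.pi_pos
  set g' : ℝ → ℝ := fun x =>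
    Real.arctan (1 / Real.sqrt (2 * x - 1)) - Real.sqrt (2 * x - 1) / (2 * x) with hg'
  have hderiv : ∀ x ∈ Set.Ioi (1/2 : ℝ), HasDerivAt Grho (g' x) x := fun x hx => Grho_deriv hx
  have hpos : ∀ x ∈ Set.Ioi (1/2 : ℝ), 0 ≤ g' x := fun x hx => rho_nonneg' hx
  have hcont : ContinuousWithinAt Grho (Set.Ici (1/2:ℝ)) (1/2) :=
    Grho_cont.continuousWithinAt
  have hint : IntegrableOn g' (Set.Ioi (1/2:ℝ)) :=
    integrableOn_Ioi_deriv_of_nonneg hcont hderiv hpos Grho_tendsto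
  have hval : ∫ x in Set.Ioi (1/2:ℝ), g' x = Real.pi/2 - Grho (1/2) :=
    integral_Ioi_of_hasDerivAt_of_nonneg hcont hderiv hpos Grho_tendsto
  have hG12 : Grho (1/2 : ℝ) = Real.pi/4 := by
    unfold Grho
    rw [show (2 * (1/2:ℝ) - 1) = 0 by norm_num]
    simp [Real.sqrt_zero, Real.arctan_zero]
    ring
  have hval' : ∫ x in Set.Ioi (1/2:ℝ), g' x = Real.pi/4 := by rw [hval, hG12]; ring
  have hrho_eq : Set.EqOn rho (fun x => (2/Real.pi) * g' x) (Set.Ioi (1/2:ℝ)) := by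
    intro x hx
    simp only [Set.mem_Ioi] at hx
    simp only [rho, hg']
    rw [if_neg (by linarith), if_neg (by push_neg; linarith)]
  have hI2 : ∫ x in Set.Ioi (1/2:ℝ), rho x = 1/2 := by
    rw [setIntegral_congr_fun measurableSet_Ioi hrho_eq, integral_const_mul, hval']
    field_simp
    norm_num
  have hint2 : IntegrableOn rho (Set.Ioi (1/2:ℝ)) := by
    have h : IntegrableOn (fun x => (2/Real.pi) * g' x) (Set.Ioi (1/2:ℝ)) :=
      hint.const_mul (2/Real.pi)
    exact h.congr_fun hrho_eq.symm measurableSet_Ioi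
  have hrho1 : Set.EqOn rho (fun _ => (1:ℝ)) (Set.Ioc (0:ℝ) (1/2)) := by
    intro x hx
    simp only [rho]
    rw [if_neg (not_lt.2 hx.1.le), if_pos hx.2]
  have hI1 : ∫ x in Set.Ioc (0:ℝ) (1/2), rho x = 1/2 := by
    rw [setIntegral_congr_fun measurableSet_Ioc hrho1, setIntegral_const]
    simp [Real.volume_Ioc]
  have hint1 : IntegrableOn rho (Set.Ioc (0:ℝ) (1/2)) := by
    apply (MeasureTheory.integrableOn_const (ne_of_lt ?_)).congr_fun hrho1.symm measurableSet_Ioc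
    exact measure_Ioc_lt_top
  have hunion : Set.Ioc (0:ℝ) (1/2) ∪ Set.Ioi (1/2:ℝ) = Set.Ioi (0:ℝ) :=
    Set.Ioc_union_Ioi_eq_Ioi (by norm_num)
  rw [← hunion, MeasureTheory.setIntegral_union (Set.Ioc_disjoint_Ioi le_rfl)
    measurableSet_Ioi hint1 hint2, hI1, hI2]
  norm_num
end

section
/- Let ρ be as above (ρ = 1 on [0,1/2], ρ(x) = (2/π)(arctan(1/√(2x−1)) − √(2x−1)/(2x)) for x > 1/2). Then ∫_0^∞ ρ(y) log|1/2 − y| dy = log(1/2). -/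
open Real MeasureTheory Set Filter intervalIntegral Topology

noncomputable def ff (t : ℝ) : ℝ := π/2 - arctan t - t/(1+t^2)

lemma one_add_sq_pos (t : ℝ) : (0:ℝ) < 1 + t^2 := by positivity

lemma ff_hasDerivAt (t : ℝ) : HasDerivAt ff (-2/(1+t^2)^2) t := by
  have h1 : HasDerivAt (fun t : ℝ => t/(1+t^2)) ((1*(1+t^2) - t*(0+2*t))/(1+t^2)^2) t := by
    exact (hasDerivAt_id t).div (((hasDerivAt_const t 1).add ((hasDerivAt_pow 2 t))).congr_deriv
      (by ring)) (one_add_sq_pos t).ne'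
  have h2 := ((hasDerivAt_const t (π/2)).sub (hasDerivAt_arctan t)).sub h1
  refine h2.congr_deriv ?_
  have h := (one_add_sq_pos t).ne'
  field_simp
  ring

lemma ff_tendsto_atTop : Tendsto ff atTop (𝓝 0) := by
  have h1 : Tendsto (fun t : ℝ => π/2 - arctan t) atTop (𝓝 (π/2 - π/2)) :=
    (tendsto_const_nhds).sub (tendsto_arctan_atTop.mono_right nhdsWithin_le_nhds)
  have h2 : Tendsto (fun t : ℝ => t/(1+t^2)) atTop (𝓝 0) := by
    have h3 : Tendsto (fun t : ℝ => (1+t^2)/t) atTop atTop := by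
      apply Filter.tendsto_atTop_mono' _ _ tendsto_id
      filter_upwards [eventually_ge_atTop (1:ℝ)] with t ht
      have ht0 : (0:ℝ) < t := by linarith
      simp only [ge_iff_le, id_eq]
      rw [le_div_iff₀ ht0]
      nlinarith
    apply h3.inv_tendsto_atTop.congr'
    filter_upwards [eventually_ge_atTop (1:ℝ)] with t ht
    rw [Pi.inv_apply, inv_div]
  have := h1.sub h2
  exact (by simpa using this : Tendsto (fun x => π / 2 - arctan x - x / (1 + x ^ 2)) atTop (𝓝 0))

lemma ff_anti : StrictAnti ff := by
  apply strictAnti_of_deriv_neg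
  intro t
  rw [(ff_hasDerivAt t).deriv]
  have h1 : (0:ℝ) < 2/(1+t^2)^2 := by positivity
  linarith [neg_div (( 1+t^2)^2) (2:ℝ)]

lemma ff_nonneg (t : ℝ) : 0 ≤ ff t := by
  refine le_of_tendsto ff_tendsto_atTop ?_
  filter_upwards [eventually_ge_atTop t] with s hs
  exact ff_anti.antitone hs

lemma ff_le {t : ℝ} (ht : 0 < t) : ff t ≤ 2/(3*t^3) := by
  set h : ℝ → ℝ := fun t => 2/(3*t^3) - ff t with hh
  have hderiv : ∀ x ∈ Ioi (0:ℝ), HasDerivAt h (-2/x^4 + 2/(1+x^2)^2) x := by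
    intro x hx
    have hx0 : (x:ℝ) ≠ 0 := (mem_Ioi.mp hx).ne'
    have d1 : HasDerivAt (fun x : ℝ => 2/(3*x^3)) ((0*(3*x^3) - 2*(3*(3*x^2)))/(3*x^3)^2) x := by
      exact (hasDerivAt_const x 2).div ((hasDerivAt_pow 3 x).const_mul 3) (by positivity)
    have := d1.sub (ff_hasDerivAt x)
    refine this.congr_deriv ?_
    have := one_add_sq_pos x
    field_simp
    ring
  have hanti : StrictAntiOn h (Ioi 0) := by
    apply strictAntiOn_of_deriv_neg (convex_Ioi 0)
    · intro x hx
      exact ((hderiv x hx).continuousAt.continuousWithinAt)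
    · intro x hx
      rw [interior_Ioi] at hx
      rw [(hderiv x hx).deriv]
      have hx0 : (0:ℝ) < x := hx
      have hp1 : (0:ℝ) < (1+x^2)^2 := by positivity
      have hp2 : (0:ℝ) < x^4 := by positivity
      have key : -2/x^4 + 2/(1+x^2)^2 = -((2*((1+x^2)^2 - x^4))/(x^4*(1+x^2)^2)) := by
        field_simp
        ring
      rw [key, neg_lt_zero]
      apply div_pos
      · nlinarith
      · positivity
  have hlim : Tendsto h atTop (𝓝 0) := by
    have h1 : Tendsto (fun x : ℝ => 2/(3*x^3)) atTop (𝓝 0) := by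
      apply Tendsto.div_atTop (tendsto_const_nhds)
      exact Tendsto.const_mul_atTop (by norm_num) (tendsto_pow_atTop (by norm_num))
    simpa using h1.sub ff_tendsto_atTop
  have h0 : 0 ≤ h t := by
    refine le_of_tendsto hlim ?_
    filter_upwards [eventually_ge_atTop t] with s hs
    exact hanti.antitoneOn (mem_Ioi.mpr ht) (mem_Ioi.mpr (lt_of_lt_of_le ht hs)) hs
  simp only [hh] at h0
  linarith

lemma log_le_two_sqrt {t : ℝ} (ht : 1 ≤ t) : log t ≤ 2 * t ^ ((1:ℝ)/2) := by
  have h0 : (0:ℝ) < t := by linarith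
  have h1 : log t = 2 * log (t ^ ((1:ℝ)/2)) := by
    rw [Real.log_rpow h0]; ring
  have h2 : log (t ^ ((1:ℝ)/2)) ≤ t ^ ((1:ℝ)/2) - 1 :=
    Real.log_le_sub_one_of_pos (Real.rpow_pos_of_pos h0 _)
  rw [h1]; linarith

lemma abs_log_le_low {t : ℝ} (h1 : 0 < t) (h2 : t ≤ 1) : |log t| ≤ 2 * t ^ (-(1:ℝ)/2) := by
  have hl : log t ≤ 0 := Real.log_nonpos h1.le h2
  rw [abs_of_nonpos hl]
  have hinv : (1:ℝ) ≤ t⁻¹ := (one_le_inv_iff₀).mpr ⟨h1, h2⟩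
  have := log_le_two_sqrt hinv
  rw [Real.log_inv] at this
  rw [Real.inv_rpow h1.le] at this
  rw [← Real.rpow_neg h1.le] at this
  convert this using 3
  ring

lemma abs_log_le_high {t : ℝ} (ht : 1 ≤ t) : |log t| ≤ 2 * t ^ ((1:ℝ)/2) := by
  rw [abs_of_nonneg (Real.log_nonneg ht)]
  exact log_le_two_sqrt ht

lemma integrableOn_Ioi_of_bound (g : ℝ → ℝ) (M : ℝ) (hc : ContinuousOn g (Ioi 0))
    (h0 : ∀ t ∈ Ioc (0:ℝ) 1, |g t| ≤ M * t ^ (-(1:ℝ)/2))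
    (hinf : ∀ t ∈ Ici (1:ℝ), |g t| ≤ M * t ^ (-(3:ℝ)/2)) : IntegrableOn g (Ioi 0) := by
  have hm1 : IntegrableOn (fun t : ℝ => M * t ^ (-(1:ℝ)/2)) (Ioc 0 1) := by
    have := (intervalIntegrable_rpow' (a := 0) (b := 1)
      (r := -(1:ℝ)/2) (by norm_num))
    rw [intervalIntegrable_iff_integrableOn_Ioc_of_le (by norm_num)] at this
    exact this.const_mul M
  have hm2 : IntegrableOn (fun t : ℝ => M * t ^ (-(3:ℝ)/2)) (Ioi 1) := by
    have := integrableOn_Ioi_rpow_of_lt (a := -(3:ℝ)/2) (by norm_num) (c := 1) (by norm_num)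
    exact this.const_mul M
  have hg1 : IntegrableOn g (Ioc 0 1) := by
    apply Integrable.mono hm1 ((hc.mono Ioc_subset_Ioi_self).aestronglyMeasurable measurableSet_Ioc)
    apply ae_restrict_of_forall_mem measurableSet_Ioc
    intro t ht
    rw [Real.norm_eq_abs]
    exact le_trans (h0 t ht) (le_abs_self _)
  have hg2 : IntegrableOn g (Ioi 1) := by
    apply Integrable.mono hm2 ((hc.mono (Ioi_subset_Ioi zero_le_one)).aestronglyMeasurable
      measurableSet_Ioi)
    apply ae_restrict_of_forall_mem measurableSet_Ioi
    intro t ht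
    rw [Real.norm_eq_abs]
    exact le_trans (hinf t (Ioi_subset_Ici_self ht)) (le_abs_self _)
  rw [← Ioc_union_Ioi_eq_Ioi (zero_le_one' ℝ)]
  exact hg1.union hg2

lemma ff_cont : Continuous ff :=
  continuous_iff_continuousAt.mpr fun t => (ff_hasDerivAt t).continuousAt

lemma ff_le_pi_div_two {t : ℝ} (ht : 0 ≤ t) : ff t ≤ π/2 := by
  have h1 : 0 ≤ arctan t := by
    rw [← Real.arctan_zero]
    exact Real.arctan_strictMono.monotone ht
  have h2 : 0 ≤ t/(1+t^2) := by positivity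
  simp only [ff]; linarith

lemma integrableOn_Ioi_of_logBound (g : ℝ → ℝ) (M : ℝ) (hc : ContinuousOn g (Ioi 0))
    (h0 : ∀ t ∈ Ioc (0:ℝ) 1, |g t| ≤ M * (|log t| + 1))
    (hinf : ∀ t ∈ Ici (1:ℝ), |g t| ≤ M * (log t + 1) / t^2) : IntegrableOn g (Ioi 0) := by
  have hM : 0 ≤ M := by
    have := h0 1 (by norm_num)
    simp at this
    exact le_trans (abs_nonneg _) this
  apply integrableOn_Ioi_of_bound g (3*M) hc
  · intro t ht
    obtain ⟨ht0, ht1⟩ := ht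
    have hr : (1:ℝ) ≤ t ^ (-(1:ℝ)/2) :=
      Real.one_le_rpow_of_pos_of_le_one_of_nonpos ht0 ht1 (by norm_num)
    have := abs_log_le_low ht0 ht1
    calc |g t| ≤ M * (|log t| + 1) := h0 t ⟨ht0, ht1⟩
    _ ≤ M * (2 * t ^ (-(1:ℝ)/2) + t ^ (-(1:ℝ)/2)) := by
        apply mul_le_mul_of_nonneg_left _ hM; linarith
    _ = 3*M * t ^ (-(1:ℝ)/2) := by ring
  · intro t ht
    have ht1 : (1:ℝ) ≤ t := ht
    have ht0 : (0:ℝ) < t := lt_of_lt_of_le one_pos ht1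
    have hr : (1:ℝ) ≤ t ^ ((1:ℝ)/2) := Real.one_le_rpow ht1 (by norm_num)
    have hlog := log_le_two_sqrt ht1
    have hkey : t ^ ((1:ℝ)/2) / t^2 = t ^ (-(3:ℝ)/2) := by
      rw [← Real.rpow_natCast t 2, ← Real.rpow_sub ht0]
      norm_num
    calc |g t| ≤ M * (log t + 1) / t^2 := hinf t ht
    _ ≤ M * (2 * t ^ ((1:ℝ)/2) + t ^ ((1:ℝ)/2)) / t^2 := by
        apply div_le_div_of_nonneg_right _ (by positivity)
        apply mul_le_mul_of_nonneg_left _ hM; linarith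
    _ = 3*M * (t ^ ((1:ℝ)/2) / t^2) := by ring
    _ = 3*M * t ^ (-(3:ℝ)/2) := by rw [hkey]

lemma contOn_log : ContinuousOn Real.log (Ioi 0) :=
  Real.continuousOn_log.mono fun x hx => (ne_of_gt hx)

lemma cont_inv_sq : Continuous (fun t : ℝ => (1+t^2)^2) := by continuity

lemma intJ' : IntegrableOn (fun t : ℝ => t^2 * log t/(1+t^2)^2) (Ioi 0) := by
  apply integrableOn_Ioi_of_logBound _ 1
  · exact ((continuous_pow 2).continuousOn.mul contOn_log).div
      cont_inv_sq.continuousOn (fun x _ => by positivity)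
  · intro t ⟨ht0, ht1⟩
    have h1 : (0:ℝ) < 1 + t^2 := one_add_sq_pos t
    rw [abs_div, abs_mul, abs_of_nonneg (sq_nonneg t), abs_of_nonneg (by positivity : (0:ℝ) ≤ (1+t^2)^2)]
    rw [div_le_iff₀ (by positivity)]
    have h2 : t^2 ≤ (1+t^2)^2 := by nlinarith
    have h3 : (1:ℝ) ≤ (1+t^2)^2 := by nlinarith
    nlinarith [abs_nonneg (log t)]
  · intro t ht
    have ht1 : (1:ℝ) ≤ t := ht
    have ht0 : (0:ℝ) < t := by linarith
    have h1 : (0:ℝ) < 1 + t^2 := one_add_sq_pos t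
    have hlog : 0 ≤ log t := Real.log_nonneg ht1
    rw [abs_div, abs_mul, abs_of_nonneg (sq_nonneg t), abs_of_nonneg hlog,
      abs_of_nonneg (by positivity : (0:ℝ) ≤ (1+t^2)^2)]
    rw [div_le_div_iff₀ (by positivity) (by positivity)]
    nlinarith [sq_nonneg t, sq_nonneg (t*t), sq_nonneg (t^2*log t)]

lemma intK' : IntegrableOn (fun t : ℝ => log t/(1+t^2)^2) (Ioi 0) := by
  apply integrableOn_Ioi_of_logBound _ 1
  · exact contOn_log.div cont_inv_sq.continuousOn (fun x _ => by positivity)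
  · intro t ⟨ht0, ht1⟩
    have h1 : (0:ℝ) < 1 + t^2 := one_add_sq_pos t
    rw [abs_div, abs_of_nonneg (by positivity : (0:ℝ) ≤ (1+t^2)^2)]
    rw [div_le_iff₀ (by positivity)]
    have h3 : (1:ℝ) ≤ (1+t^2)^2 := by nlinarith
    nlinarith [abs_nonneg (log t)]
  · intro t ht
    have ht1 : (1:ℝ) ≤ t := ht
    have h1 : (0:ℝ) < 1 + t^2 := one_add_sq_pos t
    have hlog : 0 ≤ log t := Real.log_nonneg ht1
    rw [abs_div, abs_of_nonneg hlog, abs_of_nonneg (by positivity : (0:ℝ) ≤ (1+t^2)^2)]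
    rw [div_le_div_iff₀ (by positivity) (by positivity)]
    nlinarith [sq_nonneg (t*t), sq_nonneg (t^2*log t), sq_nonneg t]

lemma intL' : IntegrableOn (fun t : ℝ => log t/(1+t^2)) (Ioi 0) := by
  apply integrableOn_Ioi_of_logBound _ 1
  · exact contOn_log.div (continuous_const.add (continuous_pow 2)).continuousOn (fun x _ => (one_add_sq_pos x).ne')
  · intro t ⟨ht0, ht1⟩
    have h1 : (0:ℝ) < 1 + t^2 := one_add_sq_pos t
    rw [abs_div, abs_of_nonneg h1.le, div_le_iff₀ h1]
    nlinarith [abs_nonneg (log t)]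
  · intro t ht
    have ht1 : (1:ℝ) ≤ t := ht
    have h1 : (0:ℝ) < 1 + t^2 := one_add_sq_pos t
    have hlog : 0 ≤ log t := Real.log_nonneg ht1
    rw [abs_div, abs_of_nonneg hlog, abs_of_nonneg h1.le,
      div_le_div_iff₀ h1 (by positivity)]
    nlinarith [sq_nonneg t]

lemma intB' : IntegrableOn (fun t : ℝ => log t * (t^2-1)/(1+t^2)^2) (Ioi 0) := by
  have : ∀ t : ℝ, log t * (t^2-1)/(1+t^2)^2
      = t^2 * log t/(1+t^2)^2 - log t/(1+t^2)^2 := by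
    intro t
    have h1 : (0:ℝ) < 1 + t^2 := one_add_sq_pos t
    field_simp
  simp only [this]
  exact intJ'.sub intK'

lemma intI1' : IntegrableOn (fun t : ℝ => t * ff t) (Ioi 0) := by
  apply integrableOn_Ioi_of_logBound _ (π/2)
  · exact (continuous_id.mul ff_cont).continuousOn
  · intro t ⟨ht0, ht1⟩
    have h1 := ff_nonneg t
    have h2 := ff_le_pi_div_two ht0.le
    rw [abs_mul, abs_of_nonneg ht0.le, abs_of_nonneg h1]
    have h3 : 0 ≤ |log t| := abs_nonneg _
    have h4 : t * ff t ≤ ff t := mul_le_of_le_one_left h1 ht1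
    nlinarith [Real.pi_pos]
  · intro t ht
    have ht1 : (1:ℝ) ≤ t := ht
    have ht0 : (0:ℝ) < t := by linarith
    have h1 := ff_nonneg t
    have h2 := ff_le ht0
    have hlog : 0 ≤ log t := Real.log_nonneg ht1
    rw [abs_mul, abs_of_nonneg ht0.le, abs_of_nonneg h1]
    rw [le_div_iff₀ (by positivity)] at h2
    rw [le_div_iff₀ (by positivity)]
    have hπ := Real.pi_gt_three
    nlinarith

lemma intI2' : IntegrableOn (fun t : ℝ => t * ff t * log t) (Ioi 0) := by
  apply integrableOn_Ioi_of_logBound _ 2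
  · exact ((continuous_id.mul ff_cont).continuousOn.mul contOn_log)
  · intro t ⟨ht0, ht1⟩
    have h1 := ff_nonneg t
    have h2 := ff_le_pi_div_two ht0.le
    rw [abs_mul, abs_mul, abs_of_nonneg ht0.le, abs_of_nonneg h1]
    have h3 : 0 ≤ |log t| := abs_nonneg _
    have hπ := Real.pi_lt_d2
    have h4 : t * ff t ≤ ff t := mul_le_of_le_one_left h1 ht1
    have h5 : t * ff t ≤ 2 := by nlinarith
    have h6 : 0 ≤ t * ff t := by positivity
    nlinarith [mul_le_mul_of_nonneg_right h5 h3]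
  · intro t ht
    have ht1 : (1:ℝ) ≤ t := ht
    have ht0 : (0:ℝ) < t := by linarith
    have h1 := ff_nonneg t
    have h2 := ff_le ht0
    have hlog : 0 ≤ log t := Real.log_nonneg ht1
    rw [abs_mul, abs_mul, abs_of_nonneg ht0.le, abs_of_nonneg h1, abs_of_nonneg hlog]
    rw [le_div_iff₀ (by positivity)] at h2
    rw [le_div_iff₀ (by positivity)]
    have h5 : t^3 * ff t ≤ 2/3 := by nlinarith
    have h6 : 0 ≤ t^3 * ff t := by positivity
    nlinarith [mul_le_mul_of_nonneg_right h5 hlog]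

lemma tendsto_div_one_add_sq : Tendsto (fun t : ℝ => t/(1+t^2)) atTop (𝓝 0) := by
  have h3 : Tendsto (fun t : ℝ => (1+t^2)/t) atTop atTop := by
    apply Filter.tendsto_atTop_mono' _ _ tendsto_id
    filter_upwards [eventually_ge_atTop (1:ℝ)] with t ht
    have ht0 : (0:ℝ) < t := by linarith
    simp only [ge_iff_le, id_eq]
    rw [le_div_iff₀ ht0]
    nlinarith
  apply h3.inv_tendsto_atTop.congr'
  filter_upwards [eventually_ge_atTop (1:ℝ)] with t ht
  rw [Pi.inv_apply, inv_div]

lemma hasDerivAt_tdiv (t : ℝ) :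
    HasDerivAt (fun t : ℝ => t/(1+t^2)) ((1-t^2)/(1+t^2)^2) t := by
  have h1 : HasDerivAt (fun t : ℝ => t/(1+t^2)) ((1*(1+t^2) - t*(0+2*t))/(1+t^2)^2) t :=
    (hasDerivAt_id t).div (((hasDerivAt_const t 1).add ((hasDerivAt_pow 2 t))).congr_deriv
      (by ring)) (one_add_sq_pos t).ne'
  convert h1 using 1
  ring

lemma arctan_tendsto : Tendsto arctan atTop (𝓝 (π/2)) :=
  tendsto_arctan_atTop.mono_right nhdsWithin_le_nhds

noncomputable def Fa (t : ℝ) : ℝ := (arctan t - t/(1+t^2))/2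

lemma Fa_hasDerivAt (t : ℝ) : HasDerivAt Fa (t^2/(1+t^2)^2) t := by
  have h := ((hasDerivAt_arctan t).sub (hasDerivAt_tdiv t)).div_const 2
  refine h.congr_deriv ?_
  have := (one_add_sq_pos t).ne'
  field_simp
  ring

lemma Fa_tendsto : Tendsto Fa atTop (𝓝 (π/4)) := by
  have h := (arctan_tendsto.sub tendsto_div_one_add_sq).div_const 2
  have e : (π/2 - 0)/2 = π/4 := by ring
  rw [e] at h
  exact h

lemma intA' : IntegrableOn (fun t : ℝ => t^2/(1+t^2)^2) (Ioi 0) := by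
  apply integrableOn_Ioi_deriv_of_nonneg' (g := Fa) (fun x _ => Fa_hasDerivAt x)
    (fun x _ => by positivity) Fa_tendsto

lemma A_eval : ∫ t in Ioi (0:ℝ), t^2/(1+t^2)^2 = π/4 := by
  have h := integral_Ioi_of_hasDerivAt_of_nonneg' (g := Fa) (a := 0)
    (fun x _ => Fa_hasDerivAt x) (fun x _ => by positivity) Fa_tendsto
  simpa [Fa, Real.arctan_zero] using h

lemma tendsto_log_div_atTop : Tendsto (fun t : ℝ => log t / t) atTop (𝓝 0) := by
  have := Real.isLittleO_log_id_atTop.tendsto_div_nhds_zero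
  simpa using this

noncomputable def Fb (t : ℝ) : ℝ := arctan t - t * log t/(1+t^2)

lemma Fb_hasDerivAt {x : ℝ} (hx : 0 < x) :
    HasDerivAt Fb (log x * (x^2-1)/(1+x^2)^2) x := by
  have h1 : HasDerivAt (fun t : ℝ => t * log t) (log x + 1) x := Real.hasDerivAt_mul_log hx.ne'
  have h2 : HasDerivAt (fun t : ℝ => t * log t/(1+t^2))
      (((log x + 1)*(1+x^2) - (x*log x)*(0+2*x))/(1+x^2)^2) x :=
    h1.div (((hasDerivAt_const x 1).add ((hasDerivAt_pow 2 x))).congr_deriv (by ring))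
      (one_add_sq_pos x).ne'
  have h := (hasDerivAt_arctan x).sub h2
  refine h.congr_deriv ?_
  have := (one_add_sq_pos x).ne'
  field_simp
  ring

lemma tendsto_mul_log_zero : Tendsto (fun t : ℝ => t * log t) (𝓝[>] 0) (𝓝 0) := by
  have := tendsto_log_mul_rpow_nhdsGT_zero one_pos
  apply this.congr'
  filter_upwards [self_mem_nhdsWithin] with x hx
  rw [Real.rpow_one, mul_comm]

lemma tendsto_sq_log_zero : Tendsto (fun t : ℝ => t^2 * log t) (𝓝[>] 0) (𝓝 0) := by
  have := tendsto_log_mul_rpow_nhdsGT_zero two_pos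
  apply this.congr'
  filter_upwards [self_mem_nhdsWithin] with x hx
  rw [show ((2:ℝ)) = ((2:ℕ):ℝ) by norm_num, Real.rpow_natCast, mul_comm]

lemma Fb_cont0 : ContinuousWithinAt Fb (Ici 0) 0 := by
  rw [← continuousWithinAt_Ioi_iff_Ici]
  have h0 : Fb 0 = 0 := by simp [Fb]
  unfold ContinuousWithinAt
  rw [h0]
  have h1 : Tendsto (fun t : ℝ => t * log t/(1+t^2)) (𝓝[>] 0) (𝓝 0) := by
    have h2 : Tendsto (fun t : ℝ => (1+t^2)) (𝓝[>] (0:ℝ)) (𝓝 1) := by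
      have : Tendsto (fun t : ℝ => (1+t^2)) (𝓝 (0:ℝ)) (𝓝 (1+0^2)) :=
        (continuous_const.add (continuous_pow 2)).tendsto 0
      simpa using this.mono_left nhdsWithin_le_nhds
    exact (by simpa using tendsto_mul_log_zero.div h2 one_ne_zero : Tendsto ((fun t : ℝ => t * log t) / fun t => 1 + t ^ 2) (𝓝[>] 0) (𝓝 0))
  have h2 : Tendsto arctan (𝓝[>] (0:ℝ)) (𝓝 0) := by
    have := Real.continuous_arctan.tendsto 0
    rw [Real.arctan_zero] at this
    exact this.mono_left nhdsWithin_le_nhds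
  exact (by simpa using h2.sub h1 : Tendsto (fun x => arctan x - x * log x / (1 + x ^ 2)) (𝓝[>] 0) (𝓝 0))

lemma Fb_tendsto : Tendsto Fb atTop (𝓝 (π/2)) := by
  have h1 : Tendsto (fun t : ℝ => t * log t/(1+t^2)) atTop (𝓝 0) := by
    apply tendsto_of_tendsto_of_tendsto_of_le_of_le' tendsto_const_nhds tendsto_log_div_atTop
    · filter_upwards [eventually_ge_atTop (1:ℝ)] with t ht
      have ht0 : (0:ℝ) < t := by linarith
      have := Real.log_nonneg ht
      positivity
    · filter_upwards [eventually_ge_atTop (1:ℝ)] with t ht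
      have ht0 : (0:ℝ) < t := by linarith
      have hl := Real.log_nonneg ht
      rw [div_le_div_iff₀ (one_add_sq_pos t) ht0]
      nlinarith
  exact (by simpa using arctan_tendsto.sub h1 : Tendsto (fun x => arctan x - x * log x / (1 + x ^ 2)) atTop (𝓝 (π / 2)))

lemma B_eval : ∫ t in Ioi (0:ℝ), log t * (t^2-1)/(1+t^2)^2 = π/2 := by
  have h := integral_Ioi_of_hasDerivAt_of_tendsto (f := Fb)
    (f' := fun t => log t * (t^2-1)/(1+t^2)^2) (a := 0) Fb_cont0
    (fun x hx => Fb_hasDerivAt hx) intB' Fb_tendsto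
  have h0 : Fb 0 = 0 := by simp [Fb]
  rw [h0] at h
  simpa using h

lemma L_eval : ∫ t in Ioi (0:ℝ), log t/(1+t^2) = 0 := by
  set g : ℝ → ℝ := fun t => log t/(1+t^2) with hg
  have key := integral_comp_rpow_Ioi g (p := (-1:ℝ)) (by norm_num)
  have congr1 : ∫ x in Ioi (0:ℝ), (|(-1:ℝ)| * x ^ ((-1:ℝ) - 1)) • g (x ^ (-1:ℝ))
      = ∫ x in Ioi (0:ℝ), -(log x/(1+x^2)) := by
    apply setIntegral_congr_fun measurableSet_Ioi
    intro x hx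
    have hx0 : (0:ℝ) < x := hx
    have hne : x ≠ 0 := hx0.ne'
    have e1 : x ^ ((-1:ℝ) - 1) = (x^2)⁻¹ := by
      rw [show ((-1:ℝ) - 1) = -(2:ℕ) by norm_num, Real.rpow_neg hx0.le, Real.rpow_natCast]
    have e2 : x ^ (-1:ℝ) = x⁻¹ := by
      rw [show (-1:ℝ) = -(1:ℕ) by norm_num, Real.rpow_neg hx0.le, Real.rpow_natCast, pow_one]
    simp only [hg, e1, e2, abs_neg, abs_one, one_mul, smul_eq_mul, Real.log_inv]
    have h2 : (0:ℝ) < 1 + (x⁻¹)^2 := one_add_sq_pos _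
    field_simp
    ring
  rw [congr1, MeasureTheory.integral_neg] at key
  have h2 : (∫ y in Ioi (0:ℝ), g y) = ∫ t in Ioi (0:ℝ), log t/(1+t^2) := rfl
  rw [h2] at key
  linarith

lemma JK_eval : (∫ t in Ioi (0:ℝ), t^2 * log t/(1+t^2)^2) = π/4 ∧
    (∫ t in Ioi (0:ℝ), log t/(1+t^2)^2) = -(π/4) := by
  have hadd : (∫ t in Ioi (0:ℝ), t^2 * log t/(1+t^2)^2) + (∫ t in Ioi (0:ℝ), log t/(1+t^2)^2)
      = 0 := by
    calc (∫ t in Ioi (0:ℝ), t^2 * log t/(1+t^2)^2) + (∫ t in Ioi (0:ℝ), log t/(1+t^2)^2)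
        = ∫ t in Ioi (0:ℝ), (t^2 * log t/(1+t^2)^2 + log t/(1+t^2)^2) :=
          (integral_add intJ' intK').symm
    _ = ∫ t in Ioi (0:ℝ), log t/(1+t^2) := by
        apply setIntegral_congr_fun measurableSet_Ioi
        intro x _
        have := (one_add_sq_pos x).ne'
        field_simp
        ring
    _ = 0 := L_eval
  have hsub : (∫ t in Ioi (0:ℝ), t^2 * log t/(1+t^2)^2) - (∫ t in Ioi (0:ℝ), log t/(1+t^2)^2)
      = π/2 := by
    calc (∫ t in Ioi (0:ℝ), t^2 * log t/(1+t^2)^2) - (∫ t in Ioi (0:ℝ), log t/(1+t^2)^2)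
        = ∫ t in Ioi (0:ℝ), (t^2 * log t/(1+t^2)^2 - log t/(1+t^2)^2) :=
          (integral_sub intJ' intK').symm
    _ = ∫ t in Ioi (0:ℝ), log t * (t^2-1)/(1+t^2)^2 := by
        apply setIntegral_congr_fun measurableSet_Ioi
        intro x _
        have := (one_add_sq_pos x).ne'
        field_simp
    _ = π/2 := B_eval
  constructor <;> linarith

noncomputable def F1 (t : ℝ) : ℝ := ff t * t^2/2 + (arctan t - t/(1+t^2))/2

lemma F1_hasDerivAt (t : ℝ) : HasDerivAt F1 (t * ff t) t := by
  have h1 : HasDerivAt (fun t : ℝ => ff t * t^2) ((-2/(1+t^2)^2) * t^2 + ff t * (2*t)) t :=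
    (ff_hasDerivAt t).mul ((hasDerivAt_pow 2 t).congr_deriv (by ring))
  have h := (h1.div_const 2).add (((hasDerivAt_arctan t).sub (hasDerivAt_tdiv t)).div_const 2)
  refine h.congr_deriv ?_
  have := (one_add_sq_pos t).ne'
  field_simp
  ring

lemma F1_tendsto : Tendsto F1 atTop (𝓝 (π/4)) := by
  have hu : Tendsto (fun t : ℝ => 1/(3*t)) atTop (𝓝 0) :=
    tendsto_const_nhds.div_atTop (Tendsto.const_mul_atTop (by norm_num) tendsto_id)
  have h1 : Tendsto (fun t : ℝ => ff t * t^2/2) atTop (𝓝 0) := by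
    apply tendsto_of_tendsto_of_tendsto_of_le_of_le' tendsto_const_nhds hu
    · filter_upwards [eventually_ge_atTop (1:ℝ)] with t ht
      have ht0 : (0:ℝ) < t := by linarith
      have := ff_nonneg t
      positivity
    · filter_upwards [eventually_ge_atTop (1:ℝ)] with t ht
      have ht0 : (0:ℝ) < t := by linarith
      have h2 := ff_le ht0
      calc ff t * t^2/2 ≤ (2/(3*t^3)) * t^2/2 := by gcongr
      _ = 1/(3*t) := by field_simp
  have h2 := h1.add Fa_tendsto
  simp only [zero_add] at h2
  exact h2.congr (fun t => rfl)

lemma I1_eval : ∫ t in Ioi (0:ℝ), t * ff t = π/4 := by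
  have h := integral_Ioi_of_hasDerivAt_of_nonneg' (g := F1) (a := 0)
    (fun x _ => F1_hasDerivAt x)
    (fun x hx => mul_nonneg (le_of_lt hx) (ff_nonneg x)) F1_tendsto
  have h0 : F1 0 = 0 := by simp [F1, ff, Real.arctan_zero]
  rw [h0] at h
  simpa using h

noncomputable def vv (t : ℝ) : ℝ := t^2/2 * log t - t^2/4

noncomputable def F2 (t : ℝ) : ℝ := ff t * vv t

lemma vv_hasDerivAt {x : ℝ} (hx : 0 < x) : HasDerivAt vv (x * log x) x := by
  have h1 : HasDerivAt (fun t : ℝ => t^2/2 * log t) ((2*x/2) * log x + x^2/2 * x⁻¹) x :=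
    (((hasDerivAt_pow 2 x).congr_deriv (by ring)).div_const 2).mul (Real.hasDerivAt_log hx.ne')
  have h2 : HasDerivAt (fun t : ℝ => t^2/4) (2*x/4) x :=
    ((hasDerivAt_pow 2 x).congr_deriv (by ring)).div_const 4
  have h := h1.sub h2
  refine h.congr_deriv ?_
  field_simp
  ring

lemma F2_hasDerivAt {x : ℝ} (hx : 0 < x) :
    HasDerivAt F2 ((-2/(1+x^2)^2) * vv x + ff x * (x * log x)) x :=
  (ff_hasDerivAt x).mul (vv_hasDerivAt hx)

lemma F2_cont0 : ContinuousWithinAt F2 (Ici 0) 0 := by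
  rw [← continuousWithinAt_Ioi_iff_Ici]
  have h0 : F2 0 = 0 := by simp [F2, vv]
  unfold ContinuousWithinAt
  rw [h0]
  have hv : Tendsto vv (𝓝[>] (0:ℝ)) (𝓝 0) := by
    have h1 : Tendsto (fun t : ℝ => t^2 * log t/2 - t^2/4) (𝓝[>] (0:ℝ)) (𝓝 (0/2 - 0^2/4)) := by
      apply Tendsto.sub (tendsto_sq_log_zero.div_const 2)
      have : Tendsto (fun t : ℝ => t^2/4) (𝓝 (0:ℝ)) (𝓝 (0^2/4)) :=
        ((continuous_pow 2).div_const 4).tendsto 0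
      exact this.mono_left nhdsWithin_le_nhds
    simp only [zero_div, ne_eq, OfNat.ofNat_ne_zero, not_false_eq_true, zero_pow, sub_zero] at h1
    apply h1.congr
    intro t
    simp [vv]
    ring
  have hffc : Tendsto ff (𝓝[>] (0:ℝ)) (𝓝 (ff 0)) :=
    (ff_cont.tendsto 0).mono_left nhdsWithin_le_nhds
  have := hffc.mul hv
  exact (by simpa [F2] using this : Tendsto (fun x => ff x * vv x) (𝓝[>] 0) (𝓝 0))

lemma F2_tendsto : Tendsto F2 atTop (𝓝 0) := by
  have hu : Tendsto (fun t : ℝ => 1/3 * (log t/t)) atTop (𝓝 (1/3 * 0)) :=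
    tendsto_log_div_atTop.const_mul (1/3:ℝ)
  rw [mul_zero] at hu
  apply tendsto_of_tendsto_of_tendsto_of_le_of_le' tendsto_const_nhds hu
  · filter_upwards [eventually_ge_atTop (2:ℝ)] with t ht
    have ht0 : (0:ℝ) < t := by linarith
    have hlog : (1:ℝ)/2 ≤ log t := by
      have := Real.log_two_gt_d9
      calc (1:ℝ)/2 ≤ log 2 := by linarith
      _ ≤ log t := Real.log_le_log (by norm_num) ht
    have hv : 0 ≤ vv t := by
      simp only [vv]
      nlinarith [sq_nonneg t]
    exact mul_nonneg (ff_nonneg t) hv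
  · filter_upwards [eventually_ge_atTop (2:ℝ)] with t ht
    have ht0 : (0:ℝ) < t := by linarith
    have hlog : (0:ℝ) ≤ log t := Real.log_nonneg (by linarith)
    have hv : 0 ≤ vv t := by
      have : (1:ℝ)/2 ≤ log t := by
        have := Real.log_two_gt_d9
        calc (1:ℝ)/2 ≤ log 2 := by linarith
        _ ≤ log t := Real.log_le_log (by norm_num) ht
      simp only [vv]
      nlinarith [sq_nonneg t]
    have hvu : vv t ≤ t^2/2 * log t := by
      simp only [vv]
      nlinarith [sq_nonneg t]
    calc F2 t = ff t * vv t := rfl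
    _ ≤ (2/(3*t^3)) * (t^2/2 * log t) :=
        mul_le_mul (ff_le ht0) hvu hv (by positivity)
    _ = 1/3 * (log t/t) := by field_simp

lemma intD' : IntegrableOn (fun t : ℝ => (-2/(1+t^2)^2) * vv t + ff t * (t * log t)) (Ioi 0) := by
  have heq : ∀ t : ℝ, (-2/(1+t^2)^2) * vv t + ff t * (t * log t)
      = (t * ff t * log t) - (t^2 * log t/(1+t^2)^2) + (1/2) * (t^2/(1+t^2)^2) := by
    intro t
    have := (one_add_sq_pos t).ne'
    simp only [vv]
    field_simp
    ring
  simp only [heq]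
  exact (intI2'.sub intJ').add (intA'.const_mul (1/2:ℝ))

lemma D_eval : ∫ t in Ioi (0:ℝ), ((-2/(1+t^2)^2) * vv t + ff t * (t * log t)) = 0 := by
  have h := integral_Ioi_of_hasDerivAt_of_tendsto (f := F2)
    (f' := fun t => (-2/(1+t^2)^2) * vv t + ff t * (t * log t)) (a := 0) F2_cont0
    (fun x hx => F2_hasDerivAt hx) intD' F2_tendsto
  have h0 : F2 0 = 0 := by simp [F2, vv]
  rw [h0] at h
  simpa using h

lemma I2_eval : ∫ t in Ioi (0:ℝ), t * ff t * log t = π/8 := by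
  have intDJ : IntegrableOn (fun t : ℝ => ((-2/(1+t^2)^2) * vv t + ff t * (t * log t))
      + t^2 * log t/(1+t^2)^2) (Ioi 0) := intD'.add intJ'
  calc ∫ t in Ioi (0:ℝ), t * ff t * log t
      = ∫ t in Ioi (0:ℝ), ((((-2/(1+t^2)^2) * vv t + ff t * (t * log t))
          + t^2 * log t/(1+t^2)^2) - (1/2) * (t^2/(1+t^2)^2)) := by
        apply setIntegral_congr_fun measurableSet_Ioi
        intro x _
        have := (one_add_sq_pos x).ne'
        simp only [vv]
        field_simp
        ring
  _ = (∫ t in Ioi (0:ℝ), (((-2/(1+t^2)^2) * vv t + ff t * (t * log t))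
          + t^2 * log t/(1+t^2)^2))
        - ∫ t in Ioi (0:ℝ), (1/2) * (t^2/(1+t^2)^2) :=
      integral_sub intDJ (intA'.const_mul (1/2:ℝ))
  _ = ((∫ t in Ioi (0:ℝ), ((-2/(1+t^2)^2) * vv t + ff t * (t * log t)))
        + ∫ t in Ioi (0:ℝ), t^2 * log t/(1+t^2)^2)
        - (1/2) * ∫ t in Ioi (0:ℝ), t^2/(1+t^2)^2 := by
      rw [integral_add intD' intJ', MeasureTheory.integral_const_mul]
  _ = (0 + π/4) - (1/2) * (π/4) := by rw [D_eval, JK_eval.1, A_eval]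
  _ = π/8 := by ring

lemma rho_eq {y : ℝ} (hy : 1/2 < y) : rho y = (2/π) * ff (Real.sqrt (2*y - 1)) := by
  have h0 : ¬ (y < 0) := by linarith
  have h1 : ¬ (y ≤ 1/2) := by linarith
  set t := Real.sqrt (2*y - 1) with hts
  have htpos : 0 < t := Real.sqrt_pos.mpr (by linarith)
  have htsq : t^2 = 2*y - 1 := Real.sq_sqrt (by linarith)
  have h2y : 2*y = 1 + t^2 := by linarith
  simp only [rho, if_neg h0, if_neg h1]
  rw [one_div, Real.arctan_inv_of_pos htpos, h2y]
  rw [show (1:ℝ)+t^2-1 = t^2 by ring, Real.sqrt_sq htpos.le]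
  simp only [ff]

noncomputable def phi : ℝ → ℝ := fun t => (1+t^2)/2

lemma phi_hasDeriv (t : ℝ) : HasDerivAt phi t t := by
  have h : HasDerivAt (fun t : ℝ => (1+t^2)/2) ((0 + 2*t)/2) t :=
    (((hasDerivAt_const t 1).add (hasDerivAt_pow 2 t)).congr_deriv (by ring)).div_const 2
  refine h.congr_deriv ?_
  ring

lemma phi_inj : InjOn phi (Ioi 0) := by
  intro a ha b hb h
  simp only [phi] at h
  have hsq : a^2 = b^2 := by linarith
  have ha0 : (0:ℝ) ≤ a := le_of_lt ha
  have hb0 : (0:ℝ) ≤ b := le_of_lt hb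
  calc a = Real.sqrt (a^2) := (Real.sqrt_sq ha0).symm
  _ = Real.sqrt (b^2) := by rw [hsq]
  _ = b := Real.sqrt_sq hb0

lemma phi_img : phi '' (Ioi 0) = Ioi (1/2) := by
  ext x
  constructor
  · rintro ⟨t, ht, rfl⟩
    have ht0 : (0:ℝ) < t := ht
    simp only [phi, mem_Ioi]
    nlinarith
  · intro hx
    have hx' : (1:ℝ)/2 < x := hx
    refine ⟨Real.sqrt (2*x - 1), ?_, ?_⟩
    · exact Real.sqrt_pos.mpr (by linarith)
    · simp only [phi]
      rw [Real.sq_sqrt (by linarith : (0:ℝ) ≤ 2*x - 1)]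
      ring

lemma integrand_eq {t : ℝ} (ht : t ∈ Ioi (0:ℝ)) :
    |t| • (rho (phi t) * log |1/2 - phi t|)
      = (4/π) * (t * ff t * log t) - (2*Real.log 2/π) * (t * ff t) := by
  have ht0 : (0:ℝ) < t := ht
  have hy : (1:ℝ)/2 < phi t := by simp only [phi]; nlinarith
  have habs : |1/2 - phi t| = t^2/2 := by
    rw [abs_of_nonpos (by simp only [phi]; nlinarith)]
    simp only [phi]; ring
  have hlog : log |1/2 - phi t| = 2 * log t - Real.log 2 := by
    rw [habs, Real.log_div (by positivity) (by norm_num), Real.log_pow]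
    push_cast
    ring
  have hsqrt : Real.sqrt (2 * phi t - 1) = t := by
    rw [show 2 * phi t - 1 = t^2 by simp only [phi]; ring, Real.sqrt_sq ht0.le]
  rw [rho_eq hy, hsqrt, hlog, abs_of_pos ht0, smul_eq_mul]
  have hπ : π ≠ 0 := Real.pi_ne_zero
  field_simp
  ring

lemma S_eval : ∫ y in Ioi ((1:ℝ)/2), rho y * log |1/2 - y|
    = 1/2 - Real.log 2/2 := by
  have key := integral_image_eq_integral_abs_deriv_smul measurableSet_Ioi
    (fun t (_ : t ∈ Ioi (0:ℝ)) => (phi_hasDeriv t).hasDerivWithinAt) phi_inj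
    (fun y => rho y * log |1/2 - y|)
  rw [phi_img] at key
  rw [key]
  have hc : ∫ t in Ioi (0:ℝ), |t| • (rho (phi t) * log |1/2 - phi t|)
      = ∫ t in Ioi (0:ℝ), ((4/π) * (t * ff t * log t) - (2*Real.log 2/π) * (t * ff t)) :=
    setIntegral_congr_fun measurableSet_Ioi (fun t ht => integrand_eq ht)
  rw [hc, integral_sub (intI2'.const_mul _) (intI1'.const_mul _),
    MeasureTheory.integral_const_mul, MeasureTheory.integral_const_mul, I1_eval, I2_eval]
  have hπ : π ≠ 0 := Real.pi_ne_zero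
  field_simp
  ring

lemma S_int : IntegrableOn (fun y => rho y * log |1/2 - y|) (Ioi ((1:ℝ)/2)) := by
  have key := integrableOn_image_iff_integrableOn_abs_deriv_smul measurableSet_Ioi
    (fun t (_ : t ∈ Ioi (0:ℝ)) => (phi_hasDeriv t).hasDerivWithinAt) phi_inj
    (fun y => rho y * log |1/2 - y|)
  rw [phi_img] at key
  rw [key]
  apply IntegrableOn.congr_fun _ (fun t ht => (integrand_eq ht).symm) measurableSet_Ioi
  exact (intI2'.const_mul _).sub (intI1'.const_mul _)

-- the Ioc piece
noncomputable def G : ℝ → ℝ := fun y => -((1/2 - y) * log (1/2 - y)) - y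

lemma G_hasDeriv {y : ℝ} (hy : y ∈ Ioo (0:ℝ) (1/2)) :
    HasDerivAt G (log (1/2 - y)) y := by
  have hu : (0:ℝ) < 1/2 - y := by have := hy.2; simp only [mem_Ioo] at hy; linarith
  have h1 : HasDerivAt (fun y : ℝ => 1/2 - y) (-1) y := by
    exact ((hasDerivAt_const y (1/2:ℝ)).sub (hasDerivAt_id y)).congr_deriv (by norm_num)
  have h2 : HasDerivAt (fun u : ℝ => u * log u) (log (1/2 - y) + 1) (1/2 - y) :=
    Real.hasDerivAt_mul_log hu.ne'
  have h3 : HasDerivAt (fun y : ℝ => (1/2 - y) * log (1/2 - y))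
      ((log (1/2 - y) + 1) * (-1)) y := h2.comp y h1
  have h4 : HasDerivAt G ((-((log (1/2 - y) + 1) * (-1))) - 1) y :=
    (h3.neg).sub (hasDerivAt_id y)
  exact h4.congr_deriv (by ring)

lemma psi_img : (fun u : ℝ => 1/2 - u) '' (Ico 0 (1/2)) = Ioc 0 (1/2) := by
  ext x
  constructor
  · rintro ⟨u, hu, rfl⟩
    obtain ⟨h1, h2⟩ := hu
    constructor <;> simp <;> linarith
  · intro hx
    obtain ⟨h1, h2⟩ := hx
    exact ⟨1/2 - x, ⟨by linarith, by linarith⟩, by ring⟩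

lemma int_log_Ioc : IntegrableOn (fun y : ℝ => log (1/2 - y)) (Ioc 0 (1/2)) := by
  have hdom : IntegrableOn (fun y : ℝ => 2 * (1/2 - y) ^ (-(1:ℝ)/2)) (Ioc 0 (1/2)) := by
    have key := integrableOn_image_iff_integrableOn_abs_deriv_smul (f := fun u : ℝ => 1/2 - u)
      (f' := fun _ => (-1:ℝ))
      measurableSet_Ico
      (fun u (_ : u ∈ Ico (0:ℝ) (1/2)) =>
        ((((hasDerivAt_const u ((1:ℝ)/2)).sub (hasDerivAt_id u)).congr_deriv
          (by norm_num)).hasDerivWithinAt))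
      (fun a _ b _ h => by
        have h' : (1:ℝ)/2 - a = 1/2 - b := h
        linarith)
      (fun y => 2 * (1/2 - y) ^ (-(1:ℝ)/2))
    rw [psi_img] at key
    rw [key]
    have : IntegrableOn (fun u : ℝ => 2 * u ^ (-(1:ℝ)/2)) (Ico 0 (1/2)) := by
      rw [integrableOn_Ico_iff_integrableOn_Ioo]
      have h2 := (intervalIntegrable_rpow' (a := 0) (b := 1/2) (r := -(1:ℝ)/2) (by norm_num))
      rw [intervalIntegrable_iff_integrableOn_Ioc_of_le (by norm_num)] at h2
      exact (h2.mono_set Ioo_subset_Ioc_self).const_mul 2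
    apply this.congr_fun _ measurableSet_Ico
    intro u hu
    simp only [abs_neg, abs_one, one_smul]
    norm_num
  apply Integrable.mono hdom
  · apply Measurable.aestronglyMeasurable
    exact Real.measurable_log.comp (measurable_const.sub measurable_id)
  · apply ae_restrict_of_forall_mem measurableSet_Ioc
    intro y hy
    obtain ⟨h1, h2⟩ := hy
    rw [Real.norm_eq_abs, Real.norm_eq_abs]
    rcases eq_or_lt_of_le h2 with rfl | h2'
    · simp
    · have hu1 : (0:ℝ) < 1/2 - y := by linarith
      have hu2 : (1:ℝ)/2 - y ≤ 1 := by linarith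
      exact le_trans (abs_log_le_low hu1 hu2) (le_abs_self _)

lemma T_integral : ∫ y in (0:ℝ)..(1/2), log (1/2 - y) = -1/2 + (1/2) * Real.log (1/2) := by
  have hint : IntervalIntegrable (fun y : ℝ => log (1/2 - y)) volume 0 (1/2) := by
    rw [intervalIntegrable_iff_integrableOn_Ioc_of_le (by norm_num)]
    exact int_log_Ioc
  have ha : Tendsto G (𝓝[>] (0:ℝ)) (𝓝 (-(1/2 * Real.log (1/2)) - 0)) := by
    have hc : ContinuousAt G 0 := by
      have h1 : ContinuousAt (fun y : ℝ => 1/2 - y) 0 := by fun_prop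
      have h2 : ContinuousAt Real.log ((fun y : ℝ => 1/2 - y) 0) :=
        Real.continuousAt_log (by norm_num)
      have h3 : ContinuousAt (fun y : ℝ => log (1/2 - y)) 0 := h2.comp h1
      have : ContinuousAt (fun y : ℝ => -((1/2 - y) * log (1/2 - y)) - y) 0 :=
        ((h1.mul h3).neg).sub continuousAt_id
      exact this
    have := hc.continuousWithinAt (s := Ioi (0:ℝ))
    unfold ContinuousWithinAt at this
    have hG0 : G 0 = -(1/2 * Real.log (1/2)) - 0 := by
      simp only [G]
      norm_num
    rwa [hG0] at this
  have hb : Tendsto G (𝓝[<] ((1:ℝ)/2)) (𝓝 (-0 - 1/2)) := by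
    have hmap : Tendsto (fun y : ℝ => 1/2 - y) (𝓝[<] ((1:ℝ)/2)) (𝓝[>] (0:ℝ)) := by
      apply tendsto_nhdsWithin_of_tendsto_nhds_of_eventually_within
      · have : Tendsto (fun y : ℝ => 1/2 - y) (𝓝 ((1:ℝ)/2)) (𝓝 (1/2 - 1/2)) :=
          (continuous_const.sub continuous_id).tendsto _
        norm_num at this
        exact this.mono_left nhdsWithin_le_nhds
      · filter_upwards [self_mem_nhdsWithin] with y hy
        simp only [mem_Iio] at hy
        simp only [mem_Ioi]
        linarith
    have h1 : Tendsto (fun y : ℝ => (1/2 - y) * log (1/2 - y)) (𝓝[<] ((1:ℝ)/2)) (𝓝 0) :=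
      tendsto_mul_log_zero.comp hmap
    have h2 : Tendsto (fun y : ℝ => y) (𝓝[<] ((1:ℝ)/2)) (𝓝 (1/2)) :=
      tendsto_id.mono_left nhdsWithin_le_nhds
    exact (h1.neg).sub h2
  have key := intervalIntegral.integral_eq_sub_of_hasDerivAt_of_tendsto (f := G)
    (f' := fun y => log (1/2 - y)) (a := 0) (b := 1/2) (by norm_num)
    (fun y hy => G_hasDeriv hy) hint ha hb
  rw [key]
  ring

lemma T_eval : ∫ y in Ioc (0:ℝ) (1/2), rho y * log |1/2 - y|
    = -1/2 + (1/2) * Real.log (1/2) := by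
  have hcong : ∀ y ∈ Ioc (0:ℝ) (1/2), rho y * log |1/2 - y| = log (1/2 - y) := by
    intro y hy
    obtain ⟨h1, h2⟩ := hy
    have hr : rho y = 1 := by
      simp only [rho, if_neg (by linarith : ¬ y < 0), if_pos h2]
    rw [hr, one_mul, abs_of_nonneg (by linarith : (0:ℝ) ≤ 1/2 - y)]
  rw [setIntegral_congr_fun measurableSet_Ioc hcong,
    ← intervalIntegral.integral_of_le (by norm_num : (0:ℝ) ≤ 1/2)]
  exact T_integral

lemma T_int : IntegrableOn (fun y => rho y * log |1/2 - y|) (Ioc (0:ℝ) (1/2)) := by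
  apply IntegrableOn.congr_fun int_log_Ioc _ measurableSet_Ioc
  intro y hy
  obtain ⟨h1, h2⟩ := hy
  have hr : rho y = 1 := by
    simp only [rho, if_neg (by linarith : ¬ y < 0), if_pos h2]
  show log (1/2 - y) = rho y * log |1/2 - y|
  rw [hr, one_mul, abs_of_nonneg (by linarith : (0:ℝ) ≤ 1/2 - y)]

theorem rho_log_half :
    ∫ y in Set.Ioi (0 : ℝ), rho y * Real.log |1 / 2 - y| = Real.log (1 / 2) := by
  have hsplit : Ioi (0:ℝ) = Ioc (0:ℝ) (1/2) ∪ Ioi ((1:ℝ)/2) :=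
    (Ioc_union_Ioi_eq_Ioi (by norm_num)).symm
  rw [hsplit, setIntegral_union (Ioc_disjoint_Ioi le_rfl) measurableSet_Ioi T_int S_int]
  rw [T_eval, S_eval]
  rw [show (1:ℝ)/2 = 2⁻¹ by norm_num, Real.log_inv]
  ring
end
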